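/- arXiv:1501.06427 — 14 statements merged into one kernel-verified Lean document; each statement's English description precedes it below -/
import Mathlib

section
/- If g : I → I is a continuous solution of the equation g^3(x) = 3*g(x) - 2*x on a nondegenerate interval I ⊆ ℝ with I ≠ ℝ, then g is strictly increasing on I. -/
private lemma key_gt (a b c y : ℝ) (hc : 0 < c) :
    ∃ n : ℕ, y ≤ a + b * (2 * n) + c * 4 ^ n := by
  obtain ⟨n, hn⟩ := exists_nat_ge (max 1 ((|a| + 2 * |b| + |y|) / c))
  refine ⟨n, ?_⟩
  have h1 : (1:ℝ) ≤ n := le_trans (le_max_left _ _) hn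
  have h2 : (|a| + 2 * |b| + |y|) / c ≤ n := le_trans (le_max_right _ _) hn
  have h3 : |a| + 2 * |b| + |y| ≤ c * n := by
    rw [div_le_iff₀ hc] at h2; linarith
  have h4 : (n:ℝ)^2 ≤ 4 ^ n := by
    have hn2 : (n:ℝ) ≤ 2 ^ n := by exact_mod_cast (Nat.lt_two_pow_self (n := n)).le
    have : ((2:ℝ)^n)^2 = 4^n := by
      rw [← pow_mul, mul_comm, pow_mul]; norm_num
    nlinarith [pow_nonneg (by norm_num : (0:ℝ) ≤ 2) n]
  nlinarith [neg_abs_le a, le_abs_self y, neg_abs_le b, le_abs_self b, abs_nonneg a,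
    abs_nonneg b, abs_nonneg y,
    mul_le_mul_of_nonneg_right h3 (by positivity : (0:ℝ) ≤ n),
    mul_le_mul_of_nonneg_left h4 hc.le]

/-- If `g : I → I` is a continuous solution of `g∘g∘g (x) = 3 g(x) - 2 x` on a
nondegenerate interval `I ⊆ ℝ` with `I ≠ ℝ`, then `g` is strictly increasing on `I`. -/
theorem stmt_1 (I : Set ℝ) (hI : I.OrdConnected) (hnd : I.Nontrivial)
    (hne : I ≠ Set.univ)
    (g : ℝ → ℝ) (hmap : Set.MapsTo g I I) (hcont : ContinuousOn g I)
    (heq : ∀ x ∈ I, g (g (g x)) = 3 * g x - 2 * x) :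
    StrictMonoOn g I := by
  have hinj : Set.InjOn g I := by
    intro u hu v hv huv
    have h1 := heq u hu
    have h2 := heq v hv
    rw [huv] at h1
    linarith
  -- Step: g (g z) = 2 g z - z on I
  have h2g : ∀ z ∈ I, g (g z) = 2 * g z - z := by
    intro z hz
    by_contra hzz
    set c : ℝ := (z - 2 * g z + g (g z)) / 9 with hc
    have hc0 : c ≠ 0 := by
      rw [hc]
      intro h
      apply hzz
      field_simp at h
      linarith
    set b : ℝ := (g (g z) - z - 3 * c) / 2 with hb
    set a : ℝ := z - c with ha
    set o : ℕ → ℝ := fun n => g^[n] z with ho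
    have hoI : ∀ n, o n ∈ I := fun n => hmap.iterate n hz
    have ho1 : ∀ n, o (n + 1) = g (o n) := fun n => Function.iterate_succ_apply' g n z
    have horec : ∀ n, o (n + 3) = 3 * o (n + 1) - 2 * o n := by
      intro n
      have h3 : o (n + 3) = g (g (g (o n))) := by
        rw [show n + 3 = (n + 2) + 1 from rfl, ho1, show n + 2 = (n + 1) + 1 from rfl,
          ho1, ho1]
      rw [h3, heq _ (hoI n), ho1]
    set f : ℕ → ℝ := fun n => a + b * n + c * (-2 : ℝ) ^ n with hfdef
    have hf3 : ∀ n : ℕ, f (n + 3) = 3 * f (n + 1) - 2 * f n := by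
      intro n
      simp only [hfdef]
      push_cast
      rw [show n + 3 = (n + 2) + 1 from rfl, show n + 2 = (n + 1) + 1 from rfl,
        pow_succ, pow_succ, pow_succ]
      ring
    have hkey : ∀ n, o n = f n ∧ o (n + 1) = f (n + 1) ∧ o (n + 2) = f (n + 2) := by
      intro n
      induction n with
      | zero =>
        refine ⟨?_, ?_, ?_⟩
        · show g^[0] z = f 0
          simp only [hfdef, Function.iterate_zero_apply]
          rw [ha]
          push_cast
          ring
        · show g^[1] z = f 1
          simp only [hfdef, Function.iterate_one]
          rw [ha, hb, hc]
          push_cast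
          ring
        · rw [show o 2 = g (o 1) from ho1 1, show o 1 = g (o 0) from ho1 0,
            show o 0 = z from rfl]
          simp only [hfdef]
          rw [ha, hb, hc]
          push_cast
          ring
      | succ n ih =>
        obtain ⟨i0, i1, i2⟩ := ih
        refine ⟨i1, i2, ?_⟩
        rw [show n + 1 + 2 = n + 3 from rfl, horec n, hf3 n, i0, i1]
    have hof : ∀ n, o n = f n := fun n => (hkey n).1
    -- the sequence o is unbounded above and below
    have hcases : ∀ y : ℝ, (∃ m, o m ≤ y) ∧ (∃ n, y ≤ o n) := by
      intro y
      have heven : ∀ n : ℕ, f (2 * n) = a + b * (2 * n) + c * 4 ^ n := by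
        intro n
        simp only [hfdef]
        rw [pow_mul]
        norm_num
      have hodd : ∀ n : ℕ, f (2 * n + 1) = (a + b) + b * (2 * n) + (-2 * c) * 4 ^ n := by
        intro n
        simp only [hfdef]
        rw [pow_succ, pow_mul]
        push_cast
        ring_nf
      rcases lt_or_gt_of_ne hc0 with hneg | hpos
      · constructor
        · obtain ⟨n, hn⟩ := key_gt (-a) (-b) (-c) (-y) (by linarith)
          exact ⟨2 * n, by rw [hof, heven]; linarith⟩
        · obtain ⟨n, hn⟩ := key_gt (a + b) b (-2 * c) y (by linarith)
          exact ⟨2 * n + 1, by rw [hof, hodd]; linarith⟩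
      · constructor
        · obtain ⟨n, hn⟩ := key_gt (-(a + b)) (-b) (2 * c) (-y) (by linarith)
          exact ⟨2 * n + 1, by rw [hof, hodd]; linarith⟩
        · obtain ⟨n, hn⟩ := key_gt a b c y hpos
          exact ⟨2 * n, by rw [hof, heven]; linarith⟩
    apply hne
    rw [Set.eq_univ_iff_forall]
    intro y
    obtain ⟨⟨m, hm⟩, ⟨n, hn⟩⟩ := hcases y
    exact hI.out (hoI m) (hoI n) ⟨hm, hn⟩
  -- Final step
  intro x hx y hy hxy
  by_contra hlt
  push_neg at hlt
  have hgxI : g x ∈ I := hmap hx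
  have hgyI : g y ∈ I := hmap hy
  have hminI : ∀ u v : ℝ, u ∈ I → v ∈ I → min u v ∈ I := by
    intro u v hu hv
    rcases le_total u v with h | h
    · rwa [min_eq_left h]
    · rwa [min_eq_right h]
  have hmaxI : ∀ u v : ℝ, u ∈ I → v ∈ I → max u v ∈ I := by
    intro u v hu hv
    rcases le_total u v with h | h
    · rwa [max_eq_right h]
    · rwa [max_eq_left h]
  set lo := min (min x (g x)) (g y) with hlo
  set hi := max (max y (g x)) (g y) with hhi
  have hloI : lo ∈ I := hminI _ _ (hminI _ _ hx hgxI) hgyI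
  have hhiI : hi ∈ I := hmaxI _ _ (hmaxI _ _ hy hgxI) hgyI
  have hsub : Set.Icc lo hi ⊆ I := hI.out hloI hhiI
  have hxm : x ∈ Set.Icc lo hi :=
    ⟨(min_le_left _ _).trans (min_le_left _ _),
      hxy.le.trans ((le_max_left y (g x)).trans (le_max_left _ _))⟩
  have hym : y ∈ Set.Icc lo hi :=
    ⟨((min_le_left _ _).trans (min_le_left _ _)).trans hxy.le,
      (le_max_left y (g x)).trans (le_max_left _ _)⟩
  have hgxm : g x ∈ Set.Icc lo hi :=
    ⟨(min_le_left _ _).trans (min_le_right x (g x)),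
      (le_max_right y (g x)).trans (le_max_left _ _)⟩
  have hgym : g y ∈ Set.Icc lo hi := ⟨min_le_right _ _, le_max_right _ _⟩
  have hlohi : lo ≤ hi := hxm.1.trans hxm.2
  rcases ContinuousOn.strictMonoOn_of_injOn_Icc' hlohi (hcont.mono hsub) (hinj.mono hsub)
    with hmono | hanti
  · exact absurd (hmono hxm hym hxy) (not_lt.mpr hlt)
  · have hgne : g y ≠ g x := fun h => absurd (hinj hy hx h) (ne_of_gt hxy)
    have hgxy : g y < g x := lt_of_le_of_ne hlt hgne
    have h1 := hanti hgym hgxm hgxy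
    have e1 := h2g x hx
    have e2 := h2g y hy
    linarith
end

section
/- Every continuous function g : ℝ → ℝ satisfying g^3(x) = 3*g(x) - 2*x for all x ∈ ℝ is a bijection of ℝ onto ℝ. -/
open Filter

/-- Every continuous solution `g : ℝ → ℝ` of `g∘g∘g (x) = 3 g(x) - 2 x` on `ℝ`
is a bijection of `ℝ` onto `ℝ`. -/
theorem stmt_2 (g : ℝ → ℝ) (hcont : Continuous g)
    (heq : ∀ x : ℝ, g (g (g x)) = 3 * g x - 2 * x) :
    Function.Bijective g := by
  have hinj : Function.Injective g := by
    intro a b hab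
    have h1 := heq a
    have h2 := heq b
    rw [hab] at h1
    have : 3 * g b - 2 * a = 3 * g b - 2 * b := h1.symm.trans h2
    linarith
  refine ⟨hinj, ?_⟩
  have hlin_top : Tendsto (fun x : ℝ => g 0 + 2/3 * x) atTop atTop :=
    tendsto_atTop_add_const_left atTop (g 0)
      (Tendsto.const_mul_atTop (by norm_num) tendsto_id)
  have hlin_bot : Tendsto (fun x : ℝ => g 0 + 2/3 * x) atBot atBot :=
    tendsto_atBot_add_const_left atBot (g 0)
      (Tendsto.const_mul_atBot (by norm_num) tendsto_id)
  rcases hcont.strictMono_of_inj hinj with hs | hs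
  · -- increasing case: slope of g is > 2/3
    have key : ∀ x y : ℝ, x < y → g x + 2/3 * (y - x) < g y := by
      intro x y hxy
      have h3 : g (g (g x)) < g (g (g y)) := hs (hs (hs hxy))
      rw [heq x, heq y] at h3
      linarith
    have htop : Tendsto g atTop atTop := by
      refine tendsto_atTop_mono' atTop
        (Filter.eventually_atTop.2 ⟨1, fun x hx => ?_⟩) hlin_top
      have := key 0 x (by linarith)
      show g 0 + 2/3 * x ≤ g x
      linarith
    have hbot : Tendsto g atBot atBot := by
      refine tendsto_atBot_mono' atBot
        (Filter.eventually_atBot.2 ⟨-1, fun x hx => ?_⟩) hlin_bot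
      have := key x 0 (by linarith)
      show g x ≤ g 0 + 2/3 * x
      linarith
    exact hcont.surjective htop hbot
  · -- decreasing case: h = g∘g∘g = 3g - 2id is surjective
    have hhc : Continuous fun x : ℝ => 3 * g x - 2 * x := by continuity
    have hlin2_bot : Tendsto (fun x : ℝ => 3 * g 0 + (-2) * x) atTop atBot :=
      tendsto_atBot_add_const_left atTop (3 * g 0)
        (Tendsto.const_mul_atTop_of_neg (by norm_num) tendsto_id)
    have hlin2_top : Tendsto (fun x : ℝ => 3 * g 0 + (-2) * x) atBot atTop :=
      tendsto_atTop_add_const_left atBot (3 * g 0)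
        (Tendsto.const_mul_atBot_of_neg (by norm_num) tendsto_id)
    have htop : Tendsto (fun x : ℝ => 3 * g x - 2 * x) atTop atBot := by
      refine tendsto_atBot_mono' atTop
        (Filter.eventually_atTop.2 ⟨0, fun x hx => ?_⟩) hlin2_bot
      have : g x ≤ g 0 := hs.antitone hx
      show 3 * g x - 2 * x ≤ 3 * g 0 + (-2) * x
      linarith
    have hbot : Tendsto (fun x : ℝ => 3 * g x - 2 * x) atBot atTop := by
      refine tendsto_atTop_mono' atBot
        (Filter.eventually_atBot.2 ⟨0, fun x hx => ?_⟩) hlin2_top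
      have : g 0 ≤ g x := hs.antitone hx
      show 3 * g 0 + (-2) * x ≤ 3 * g x - 2 * x
      linarith
    have hsurj : Function.Surjective fun x : ℝ => 3 * g x - 2 * x :=
      hhc.surjective' hbot htop
    intro y
    obtain ⟨x, hx⟩ := hsurj y
    exact ⟨g (g x), (heq x).trans hx⟩
end

section
/- Let (a_n), (b_n), (c_n) be the sequences with a_0 = 0, b_0 = 3, c_0 = -2 and a_{n+1} = b_n, b_{n+1} = 3*a_n + c_n, c_{n+1} = -2*a_n for all n ≥ 0. Then for every n ≥ 0 one has b_{n+1} - b_n = Σ_{k=0}^{n+3} (-2)^k. -/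
/-- With the integer sequences `a, b, c` defined by `a 0 = 0`, `b 0 = 3`, `c 0 = -2`,
`a (n+1) = b n`, `b (n+1) = 3 * a n + c n`, `c (n+1) = -2 * a n`, one has
`b (n+1) - b n = ∑_{k=0}^{n+3} (-2)^k` for every `n`. -/
theorem stmt_5 (a b c : ℕ → ℤ)
    (ha0 : a 0 = 0) (hb0 : b 0 = 3) (hc0 : c 0 = -2)
    (ha : ∀ n, a (n + 1) = b n) (hb : ∀ n, b (n + 1) = 3 * a n + c n)
    (hc : ∀ n, c (n + 1) = -2 * a n) :
    ∀ n : ℕ, b (n + 1) - b n = ∑ k ∈ Finset.range (n + 4), (-2 : ℤ) ^ k := by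
  have key : ∀ n : ℕ, 9 * a n = 8 + 3 * n - 8 * (-2 : ℤ) ^ n ∧
      9 * b n = 11 + 3 * n + 16 * (-2 : ℤ) ^ n ∧
      9 * c n = -10 - 6 * n - 8 * (-2 : ℤ) ^ n := by
    intro n
    induction n with
    | zero => simp [ha0, hb0, hc0]
    | succ m ih =>
      obtain ⟨iha, ihb, ihc⟩ := ih
      refine ⟨?_, ?_, ?_⟩
      · rw [ha m]; push_cast; rw [pow_succ]; linarith
      · rw [hb m]; push_cast; rw [pow_succ]; linarith
      · rw [hc m]; push_cast; rw [pow_succ]; linarith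
  intro n
  have hsum : (∑ k ∈ Finset.range (n + 4), (-2 : ℤ) ^ k) * ((-2 : ℤ) - 1)
      = (-2 : ℤ) ^ (n + 4) - 1 := geom_sum_mul _ _
  have h1 := (key (n + 1)).2.1
  have h2 := (key n).2.1
  have hp : ((-2 : ℤ) ^ (n + 4)) = 16 * (-2 : ℤ) ^ n := by ring
  have hp1 : ((-2 : ℤ) ^ (n + 1)) = -2 * (-2 : ℤ) ^ n := by ring
  rw [hp] at hsum
  rw [hp1] at h1
  push_cast at h1 h2
  linarith
end

section
/- Let (b_n) be the sequence with b_n = ((-2)^{n+4} + 3*n + 11)/9 (equivalently, the middle sequence of the recurrence a_0 = 0, b_0 = 3, c_0 = -2, a_{n+1} = b_n, b_{n+1} = 3*a_n + c_n, c_{n+1} = -2*a_n). If g : I → I is a continuous solution of g^3(x) = 3*g(x) - 2*x on a nondegenerate interval I ⊆ ℝ, then for every x ∈ I the sequence g^{n+3}(x)/b_n converges, as n → ∞, to -(1/2)*g^2(x) + g(x) - (1/2)*x. -/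
/-- Let `b n = ((-2)^(n+4) + 3n + 11) / 9`. If `g : I → I` is a continuous solution of
`g∘g∘g (x) = 3 g(x) - 2 x` on a nondegenerate interval `I ⊆ ℝ`, then for every `x ∈ I`
the sequence `g^[n+3] x / b n` converges to `-(1/2) g(g x) + g x - (1/2) x`. -/
theorem stmt_7 (b : ℕ → ℝ)
    (hbdef : ∀ n : ℕ, b n = ((-2 : ℝ) ^ (n + 4) + 3 * n + 11) / 9)
    (I : Set ℝ) (hI : I.OrdConnected) (hnd : I.Nontrivial)
    (g : ℝ → ℝ) (hmap : Set.MapsTo g I I) (hcont : ContinuousOn g I)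
    (heq : ∀ x ∈ I, g (g (g x)) = 3 * g x - 2 * x) :
    ∀ x ∈ I,
      Filter.Tendsto (fun n : ℕ => g^[n + 3] x / b n) Filter.atTop
        (nhds (-(1 / 2) * g (g x) + g x - (1 / 2) * x)) := by
  intro x hx
  -- iterates stay in I
  have hmem : ∀ n, g^[n] x ∈ I := by
    intro n
    induction n with
    | zero => simpa using hx
    | succ k ih => rw [Function.iterate_succ_apply']; exact hmap ih
  -- recurrence
  have hrec : ∀ n, g^[n + 3] x = 3 * g^[n + 1] x - 2 * g^[n] x := by
    intro n
    have h3 : g^[n + 3] x = g (g (g (g^[n] x))) := by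
      rw [show n + 3 = 3 + n by ring, Function.iterate_add_apply]
      simp [Function.iterate_succ_apply']
    have h1 : g^[n + 1] x = g (g^[n] x) := Function.iterate_succ_apply' g n x
    rw [h3, h1, heq _ (hmem n)]
  -- closed form
  set γ : ℝ := (g (g x) - 2 * g x + x) / 9 with hγ
  set β : ℝ := g x - x + 3 * γ with hβ
  set α : ℝ := x - γ with hα
  have hcf : ∀ n, g^[n] x = α + β * n + γ * (-2 : ℝ) ^ n := by
    have key : ∀ n, (g^[n] x = α + β * n + γ * (-2 : ℝ) ^ n) ∧
        (g^[n + 1] x = α + β * ((n : ℝ) + 1) + γ * (-2 : ℝ) ^ (n + 1)) ∧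
        (g^[n + 2] x = α + β * ((n : ℝ) + 2) + γ * (-2 : ℝ) ^ (n + 2)) := by
      intro n
      induction n with
      | zero =>
        refine ⟨?_, ?_, ?_⟩
        · simp only [Function.iterate_zero_apply, Nat.cast_zero, pow_zero]
          rw [hα]; ring
        · show g x = _
          rw [hα, hβ]; push_cast; ring
        · show g (g x) = _
          rw [hα, hβ, hγ]; push_cast; ring
      | succ k ih =>
        obtain ⟨h0, h1, h2⟩ := ih
        refine ⟨?_, ?_, ?_⟩
        · push_cast; exact_mod_cast h1
        · push_cast; exact_mod_cast h2
        · show g^[k + 3] x = _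
          rw [hrec k, h1, h0]
          push_cast
          ring
    exact fun n => (key n).1
  -- rewrite the sequence
  have hne : ∀ n : ℕ, ((-1 / 2 : ℝ)) ^ n ≠ 0 := fun n => pow_ne_zero n (by norm_num)
  have hform : ∀ n : ℕ, g^[n + 3] x / b n =
      (9 * ((α + β * (n + 3)) * (-1 / 2 : ℝ) ^ n - 8 * γ)) /
        (16 + (3 * n + 11) * (-1 / 2 : ℝ) ^ n) := by
    intro n
    have h2 : ((-2 : ℝ)) ^ n * ((-1 / 2 : ℝ)) ^ n = 1 := by
      rw [← mul_pow]; norm_num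
    rw [hcf (n + 3), hbdef n, div_div_eq_mul_div, ← mul_div_mul_right _ _ (hne n)]
    congr 1
    · push_cast
      rw [pow_add]
      linear_combination (-72 * γ) * h2
    · push_cast
      rw [pow_add]
      linear_combination (16 : ℝ) * h2
  have habs : |(-1 / 2 : ℝ)| < 1 := by rw [abs_lt]; constructor <;> norm_num
  have hp : Filter.Tendsto (fun n : ℕ => ((-1 / 2 : ℝ)) ^ n) Filter.atTop (nhds 0) :=
    tendsto_pow_atTop_nhds_zero_of_abs_lt_one habs
  have hnp : Filter.Tendsto (fun n : ℕ => (n : ℝ) * ((-1 / 2 : ℝ)) ^ n) Filter.atTop (nhds 0) :=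
    tendsto_self_mul_const_pow_of_abs_lt_one habs
  have hnum : Filter.Tendsto
      (fun n : ℕ => 9 * ((α + β * (n + 3)) * (-1 / 2 : ℝ) ^ n - 8 * γ))
      Filter.atTop (nhds (9 * (0 - 8 * γ))) := by
    apply Filter.Tendsto.const_mul
    apply Filter.Tendsto.sub_const
    have : Filter.Tendsto (fun n : ℕ => (α + β * 3) * (-1 / 2 : ℝ) ^ n
        + β * ((n : ℝ) * (-1 / 2 : ℝ) ^ n)) Filter.atTop (nhds ((α + β * 3) * 0 + β * 0)) :=
      ((hp.const_mul _).add (hnp.const_mul _))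
    simpa only [mul_zero, add_zero] using this.congr (fun n => by ring)
  have hden : Filter.Tendsto
      (fun n : ℕ => 16 + (3 * (n : ℝ) + 11) * (-1 / 2 : ℝ) ^ n)
      Filter.atTop (nhds (16 + 0)) := by
    apply Filter.Tendsto.const_add
    have : Filter.Tendsto (fun n : ℕ => 3 * ((n : ℝ) * (-1 / 2 : ℝ) ^ n)
        + 11 * (-1 / 2 : ℝ) ^ n) Filter.atTop (nhds (3 * 0 + 11 * 0)) :=
      ((hnp.const_mul _).add (hp.const_mul _))
    simpa only [mul_zero, add_zero] using this.congr (fun n => by ring)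
  have hdiv := hnum.div hden (by norm_num)
  have hlim : (9 * (0 - 8 * γ)) / (16 + 0) = -(1 / 2) * g (g x) + g x - (1 / 2) * x := by
    rw [hγ]; ring
  rw [← hlim]
  exact hdiv.congr (fun n => (hform n).symm)
end

section
/- Let g : I → I be a continuous solution of g^3(x) = 3*g(x) - 2*x on a nondegenerate interval I ⊆ ℝ. If for every x ∈ I the sequence (g^n(x))_{n≥1} converges to a real number, then g(x) = x for every x ∈ I. -/
/-- Let `g : I → I` be a continuous solution of `g∘g∘g (x) = 3 g(x) - 2 x` on a
nondegenerate interval `I ⊆ ℝ`. If for every `x ∈ I` the sequence of iterates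
`g^[n] x` converges to a real number, then `g = id` on `I`. -/
theorem stmt_8 (I : Set ℝ) (hI : I.OrdConnected) (hnd : I.Nontrivial)
    (g : ℝ → ℝ) (hmap : Set.MapsTo g I I) (hcont : ContinuousOn g I)
    (heq : ∀ x ∈ I, g (g (g x)) = 3 * g x - 2 * x)
    (hconv : ∀ x ∈ I, ∃ L : ℝ,
      Filter.Tendsto (fun n : ℕ => g^[n] x) Filter.atTop (nhds L)) :
    ∀ x ∈ I, g x = x := by
  intro x hx
  set a : ℕ → ℝ := fun n => g^[n] x with ha
  have hmem : ∀ n, a n ∈ I := by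
    intro n
    induction n with
    | zero => simpa [ha] using hx
    | succ n ih =>
        have : a (n + 1) = g (a n) := by
          simp [ha, Function.iterate_succ_apply']
        rw [this]; exact hmap ih
  have hstep : ∀ n, a (n + 1) = g (a n) := by
    intro n; simp [ha, Function.iterate_succ_apply']
  have hrec : ∀ n, a (n + 3) = 3 * a (n + 1) - 2 * a n := by
    intro n
    have h3 : a (n + 3) = g (g (g (a n))) := by
      rw [show n + 3 = n + 1 + 1 + 1 by ring, hstep, hstep, hstep]
    rw [h3, heq _ (hmem n), hstep]
  obtain ⟨L, hL⟩ := hconv x hx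
  have hL' : Filter.Tendsto a Filter.atTop (nhds L) := hL
  have hshift : ∀ k : ℕ, Filter.Tendsto (fun n => a (n + k)) Filter.atTop (nhds L) :=
    fun k => hL'.comp (Filter.tendsto_add_atTop_nat k)
  -- second differences
  set b : ℕ → ℝ := fun n => a (n + 2) - 2 * a (n + 1) + a n with hb
  have hbrec : ∀ n, b (n + 1) = -2 * b n := by
    intro n
    have := hrec n
    simp only [hb]
    rw [show n + 1 + 2 = n + 3 by ring, this]
    ring
  have hbn : ∀ n, b n = (-2 : ℝ) ^ n * b 0 := by
    intro n
    induction n with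
    | zero => simp
    | succ n ih => rw [hbrec n, ih]; ring
  have hb0 : b 0 = 0 := by
    by_contra hne
    have htend : Filter.Tendsto b Filter.atTop (nhds 0) := by
      have : Filter.Tendsto (fun n => a (n + 2) - 2 * a (n + 1) + a n)
          Filter.atTop (nhds (L - 2 * L + L)) :=
        ((hshift 2).sub (((hshift 1).const_mul 2))).add hL'
      have h0 : L - 2 * L + L = 0 := by ring
      rw [h0] at this
      exact this
    have hpos : 0 < |b 0| := abs_pos.mpr hne
    have := (htend.eventually (Metric.ball_mem_nhds 0 hpos)).exists
    obtain ⟨n, hn⟩ := this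
    have hdist : |b n| < |b 0| := by simpa [Real.dist_eq] using hn
    have : |b n| = 2 ^ n * |b 0| := by
      rw [hbn n, abs_mul, abs_pow, abs_neg, abs_two]
    rw [this] at hdist
    nlinarith [(one_le_pow₀ (by norm_num : (1:ℝ) ≤ 2) : (1:ℝ) ≤ 2 ^ n)]
  have hball : ∀ n, b n = 0 := fun n => by rw [hbn n, hb0, mul_zero]
  -- first differences are constant
  set d : ℕ → ℝ := fun n => a (n + 1) - a n with hd
  have hdconst : ∀ n, d n = d 0 := by
    intro n
    induction n with
    | zero => rfl
    | succ n ih =>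
        have := hball n
        simp only [hb] at this
        have : d (n + 1) = d n := by simp only [hd]; linarith
        rw [this, ih]
  have hdtend : Filter.Tendsto d Filter.atTop (nhds 0) := by
    have : Filter.Tendsto (fun n => a (n + 1) - a n) Filter.atTop (nhds (L - L)) :=
      (hshift 1).sub hL'
    simpa using this
  have hd0 : d 0 = 0 := by
    have : Filter.Tendsto (fun _ : ℕ => d 0) Filter.atTop (nhds 0) := by
      apply hdtend.congr; intro n; rw [hdconst n]
    exact tendsto_const_nhds_iff.mp this
  have : a 1 = a 0 := by have := hd0; simp only [hd] at this; linarith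
  simpa [ha] using this
end

section
/- Let g : I → I be a continuous solution of g^3(x) = 3*g(x) - 2*x on a nondegenerate interval I ⊆ ℝ. If x ∈ I satisfies g^2(x) - 2*g(x) + x ≠ 0, then the sequence g^{n+4}(x)/g^{n+3}(x) converges to -2 as n → ∞. -/
open Filter

lemma aux_geo (A B : ℝ) :
    Tendsto (fun n : ℕ => (A + B * n) * (-1/2 : ℝ)^n) atTop (nhds 0) := by
  have hr : ‖(-1/2 : ℝ)‖ < 1 := by norm_num
  have h1 : Tendsto (fun n : ℕ => (-1/2 : ℝ)^n) atTop (nhds 0) :=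
    tendsto_pow_atTop_nhds_zero_of_norm_lt_one hr
  have h2 : Tendsto (fun n : ℕ => (n : ℝ)^1 * (-1/2 : ℝ)^n) atTop (nhds 0) :=
    (summable_pow_mul_geometric_of_norm_lt_one 1 hr).tendsto_atTop_zero
  have := (h1.const_mul A).add (h2.const_mul B)
  simpa [mul_comm, mul_assoc, mul_left_comm, add_mul] using this

/-- Let `g : I → I` be a continuous solution of `g∘g∘g (x) = 3 g(x) - 2 x` on a
nondegenerate interval `I ⊆ ℝ`. If `x ∈ I` satisfies `g(g x) - 2 g(x) + x ≠ 0`, then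
`g^[n+4] x / g^[n+3] x → -2` as `n → ∞`. -/
theorem stmt_9 (I : Set ℝ) (hI : I.OrdConnected) (hnd : I.Nontrivial)
    (g : ℝ → ℝ) (hmap : Set.MapsTo g I I) (hcont : ContinuousOn g I)
    (heq : ∀ x ∈ I, g (g (g x)) = 3 * g x - 2 * x)
    (x : ℝ) (hx : x ∈ I) (hne : g (g x) - 2 * g x + x ≠ 0) :
    Filter.Tendsto (fun n : ℕ => g^[n + 4] x / g^[n + 3] x) Filter.atTop
      (nhds (-2)) := by
  set a : ℕ → ℝ := fun n => g^[n] x with ha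
  have hmem : ∀ n, a n ∈ I := fun n => (hmap.iterate n) hx
  have hstep : ∀ n, a (n + 1) = g (a n) := by
    intro n; simp [ha, Function.iterate_succ_apply']
  have hrec : ∀ n, a (n + 3) = 3 * a (n + 1) - 2 * a n := by
    intro n
    have h := heq (a n) (hmem n)
    have e3 : a (n + 3) = g (g (g (a n))) := by
      rw [hstep, hstep, hstep]
    rw [e3, h, hstep]
  set C : ℝ := (a 2 - 2 * a 1 + a 0) / 9 with hC
  set A : ℝ := a 0 - C with hA
  set B : ℝ := a 1 - a 0 + 3 * C with hB
  have hCne : C ≠ 0 := by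
    have h2 : a 2 = g (g x) := by simp [ha, Function.iterate_succ_apply']
    have h1 : a 1 = g x := by simp [ha]
    have h0 : a 0 = x := by simp [ha]
    rw [hC, h0, h1, h2]
    exact div_ne_zero hne (by norm_num)
  have hform : ∀ n, a n = A + B * n + C * (-2 : ℝ)^n := by
    have key : ∀ n, (a n = A + B * n + C * (-2 : ℝ)^n) ∧
        (a (n+1) = A + B * ↑(n+1) + C * (-2 : ℝ)^(n+1)) ∧
        (a (n+2) = A + B * ↑(n+2) + C * (-2 : ℝ)^(n+2)) := by
      intro n
      induction n with
      | zero =>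
        refine ⟨?_, ?_, ?_⟩
        · rw [hA]; push_cast; ring
        · rw [hA, hB]; push_cast; ring
        · rw [hA, hB, hC]; push_cast; ring
      | succ n ih =>
        obtain ⟨p0, p1, p2⟩ := ih
        refine ⟨p1, p2, ?_⟩
        have h3 := hrec n
        rw [show n + 1 + 2 = n + 3 from rfl, h3, p1, p0]
        push_cast; ring
    exact fun n => (key n).1
  -- the limit of the auxiliary expression
  have hlim1 : Tendsto (fun n : ℕ => (A + B * ((n : ℝ) + 4)) * (-1/2 : ℝ)^(n+3))
      atTop (nhds 0) := by
    have := aux_geo ((A + 4*B) * (-1/2)^3) (B * (-1/2)^3)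
    convert this using 2 with n
    ring
  have hlim2 : Tendsto (fun n : ℕ => (A + B * ((n : ℝ) + 3)) * (-1/2 : ℝ)^(n+3))
      atTop (nhds 0) := by
    have := aux_geo ((A + 3*B) * (-1/2)^3) (B * (-1/2)^3)
    convert this using 2 with n
    ring
  have hmain : Tendsto (fun n : ℕ =>
      ((A + B * ((n : ℝ) + 4)) * (-1/2 : ℝ)^(n+3) + (-2) * C) /
      ((A + B * ((n : ℝ) + 3)) * (-1/2 : ℝ)^(n+3) + C)) atTop (nhds (-2)) := by
    have := (hlim1.add (tendsto_const_nhds (x := (-2) * C))).div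
      (hlim2.add (tendsto_const_nhds (x := C))) (by simpa using hCne)
    have heq2 : (0 + (-2) * C) / (0 + C) = -2 := by
      rw [zero_add, zero_add]; field_simp
    rwa [heq2] at this
  refine hmain.congr fun n => ?_
  have hinv : ((-1 : ℝ)/2)^(n+3) = ((-2 : ℝ)^(n+3))⁻¹ := by
    rw [← inv_pow]; norm_num
  have hp : ((-2 : ℝ))^(n+3) ≠ 0 := pow_ne_zero _ (by norm_num)
  have e1 : (A + B * ((n : ℝ) + 4)) * (-1/2 : ℝ)^(n+3) + (-2) * C
      = (A + B * (↑(n+4)) + C * (-2 : ℝ)^(n+4)) / (-2 : ℝ)^(n+3) := by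
    rw [hinv]; field_simp; try push_cast; try ring
  have e2 : (A + B * ((n : ℝ) + 3)) * (-1/2 : ℝ)^(n+3) + C
      = (A + B * (↑(n+3)) + C * (-2 : ℝ)^(n+3)) / (-2 : ℝ)^(n+3) := by
    rw [hinv]; field_simp; try push_cast; try ring
  rw [e1, e2, div_div_div_cancel_right₀ hp]
  show _ = a (n+4) / a (n+3)
  rw [hform (n+4), hform (n+3)]
end

section
/- Let g : I → I be a continuous solution of g^3(x) = 3*g(x) - 2*x on a nondegenerate interval I ⊆ ℝ. If g is increasing on I, then g^{n+1}(x) - g^n(x) = g(x) - x for all n ≥ 1 and all x ∈ I. -/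
/-- Let `g : I → I` be a continuous solution of `g∘g∘g (x) = 3 g(x) - 2 x` on a
nondegenerate interval `I ⊆ ℝ`. If `g` is increasing on `I`, then
`g^[n+1] x - g^[n] x = g x - x` for all `n ≥ 1` and all `x ∈ I`. -/
theorem stmt_10 (I : Set ℝ) (hI : I.OrdConnected) (hnd : I.Nontrivial)
    (g : ℝ → ℝ) (hmap : Set.MapsTo g I I) (hcont : ContinuousOn g I)
    (heq : ∀ x ∈ I, g (g (g x)) = 3 * g x - 2 * x)
    (hmono : MonotoneOn g I) :
    ∀ n : ℕ, 1 ≤ n → ∀ x ∈ I, g^[n + 1] x - g^[n] x = g x - x := by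
  intro n hn x hx
  have haI : ∀ m : ℕ, g^[m] x ∈ I := by
    intro m
    induction m with
    | zero => simpa using hx
    | succ k ih => rw [Function.iterate_succ_apply']; exact hmap ih
  set a : ℕ → ℝ := fun m => g^[m] x with ha
  have haI' : ∀ m, a m ∈ I := haI
  have hstep : ∀ m, a (m+1) = g (a m) := fun m => Function.iterate_succ_apply' g m x
  have hrec : ∀ m, a (m+3) = 3 * a (m+1) - 2 * a m := by
    intro m
    have e1 : a (m+3) = g (a (m+2)) := hstep (m+2)
    have e2 : a (m+2) = g (a (m+1)) := hstep (m+1)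
    have e3 : a (m+1) = g (a m) := hstep m
    rw [e1, e2, e3]
    exact heq _ (haI' m)
  set b : ℕ → ℝ := fun m => a (m+1) - a m with hb
  have hrecb : ∀ m, b (m+2) = 2 * b m - b (m+1) := by
    intro m
    show a (m+3) - a (m+2) = 2 * (a (m+1) - a m) - (a (m+2) - a (m+1))
    linarith [hrec m]
  have hs : ∀ m, b (m+1) + 2 * b m = b 1 + 2 * b 0 := by
    intro m
    induction m with
    | zero => rfl
    | succ k ih =>
      show b (k+2) + 2 * b (k+1) = b 1 + 2 * b 0
      have := hrecb k
      linarith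
  have hd : ∀ m, b (m+1) - b m = (-2:ℝ)^m * (b 1 - b 0) := by
    intro m
    induction m with
    | zero => simp
    | succ k ih =>
      show b (k+2) - b (k+1) = (-2:ℝ)^(k+1) * (b 1 - b 0)
      linear_combination (-2 : ℝ) * ih + hrecb k
  have hsign : (∀ m, 0 ≤ b m) ∨ (∀ m, b m ≤ 0) := by
    rcases le_total (a 0) (a 1) with h | h
    · left
      have key : ∀ m, a m ≤ a (m+1) := by
        intro m
        induction m with
        | zero => exact h
        | succ k ih =>
          calc a (k+1) = g (a k) := hstep k
            _ ≤ g (a (k+1)) := hmono (haI' k) (haI' (k+1)) ih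
            _ = a (k+2) := (hstep (k+1)).symm
      exact fun m => sub_nonneg.2 (key m)
    · right
      have key : ∀ m, a (m+1) ≤ a m := by
        intro m
        induction m with
        | zero => exact h
        | succ k ih =>
          calc a (k+2) = g (a (k+1)) := hstep (k+1)
            _ ≤ g (a k) := hmono (haI' (k+1)) (haI' k) ih
            _ = a (k+1) := (hstep k).symm
      exact fun m => sub_nonpos.2 (key m)
  have hS : ∀ m, |b (m+1) - b m| ≤ 2 * |b 1 + 2 * b 0| := by
    intro m
    have habs1 := le_abs_self (b 1 + 2 * b 0)
    have habs2 := neg_abs_le (b 1 + 2 * b 0)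
    have hsm := hs m
    rcases hsign with hp | hp
    · rw [abs_le]
      constructor <;> linarith [hp m, hp (m+1), hp 0, hp 1]
    · rw [abs_le]
      constructor <;> linarith [hp m, hp (m+1), hp 0, hp 1]
  have hb10 : b 1 = b 0 := by
    by_contra hne
    have hpos : 0 < |b 1 - b 0| := abs_pos.2 (sub_ne_zero.2 hne)
    obtain ⟨m, hm⟩ := pow_unbounded_of_one_lt
      ((2 * |b 1 + 2 * b 0|) / |b 1 - b 0|) (by norm_num : (1:ℝ) < 2)
    have h1 := hS m
    rw [hd m, abs_mul, abs_pow] at h1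
    have e : |(-2:ℝ)| = 2 := by norm_num
    rw [e] at h1
    rw [div_lt_iff₀ hpos] at hm
    linarith
  have hall : ∀ m, b m = b 0 := by
    intro m
    induction m with
    | zero => rfl
    | succ k ih =>
      have := hs k
      linarith
  have hfin : b n = b 0 := hall n
  simp only [hb, ha] at hfin
  simpa using hfin
end

section
/- Assume I ⊆ ℝ is a bounded nondegenerate interval. If g : I → I is a continuous solution of g^3(x) = 3*g(x) - 2*x on I, then g(x) = x for every x ∈ I. -/
/-- If `I ⊆ ℝ` is a bounded nondegenerate interval and `g : I → I` is a continuous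
solution of `g∘g∘g (x) = 3 g(x) - 2 x` on `I`, then `g = id` on `I`. -/
theorem stmt_11 (I : Set ℝ) (hI : I.OrdConnected) (hnd : I.Nontrivial)
    (hbdd : Bornology.IsBounded I)
    (g : ℝ → ℝ) (hmap : Set.MapsTo g I I) (hcont : ContinuousOn g I)
    (heq : ∀ x ∈ I, g (g (g x)) = 3 * g x - 2 * x) :
    ∀ x ∈ I, g x = x := by
  obtain ⟨M, hM⟩ := hbdd.exists_norm_le
  intro x hx
  set a : ℕ → ℝ := fun n => g^[n] x with ha
  have hmem : ∀ n, a n ∈ I := by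
    intro n
    induction n with
    | zero => simpa [ha] using hx
    | succ n ih =>
      have : a (n+1) = g (a n) := by
        simp [ha, Function.iterate_succ_apply']
      rw [this]; exact hmap ih
  have hrec : ∀ n, a (n+3) = 3 * a (n+1) - 2 * a n := by
    intro n
    have h1 : a (n+3) = g (g (g (a n))) := by
      simp [ha, Function.iterate_succ_apply']
    have h2 : a (n+1) = g (a n) := by
      simp [ha, Function.iterate_succ_apply']
    rw [h1, h2, heq _ (hmem n)]
  have habs : ∀ n, |a n| ≤ M := fun n => by
    simpa [Real.norm_eq_abs] using hM _ (hmem n)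
  have hM0 : 0 ≤ M := le_trans (abs_nonneg _) (habs 0)
  -- e n = a(n+2) - 2 a(n+1) + a n satisfies e(n+1) = -2 * e n
  set e : ℕ → ℝ := fun n => a (n+2) - 2 * a (n+1) + a n with he
  have herec : ∀ n, e (n+1) = -2 * e n := by
    intro n
    simp only [he]
    have := hrec n
    ring_nf
    ring_nf at this
    linarith
  have hegeom : ∀ n, e n = (-2)^n * e 0 := by
    intro n
    induction n with
    | zero => simp
    | succ n ih => rw [herec n, ih]; ring
  have he0 : e 0 = 0 := by
    by_contra h0
    have hpos : 0 < |e 0| := abs_pos.mpr h0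
    obtain ⟨n, hn⟩ := pow_unbounded_of_one_lt ((4*M)/|e 0|) (by norm_num : (1:ℝ) < 2)
    have hb : |e n| ≤ 4 * M := by
      have := habs n; have := habs (n+1); have := habs (n+2)
      have h1 : |e n| ≤ |a (n+2)| + 2 * |a (n+1)| + |a n| := by
        simp only [he]
        calc |a (n+2) - 2 * a (n+1) + a n| ≤ |a (n+2) - 2 * a (n+1)| + |a n| := abs_add_le _ _
          _ ≤ |a (n+2)| + |2 * a (n+1)| + |a n| := by linarith [abs_sub (a (n+2)) (2 * a (n+1))]
          _ = |a (n+2)| + 2 * |a (n+1)| + |a n| := by rw [abs_mul]; norm_num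
      linarith
    have : |e n| = 2^n * |e 0| := by
      rw [hegeom n, abs_mul, abs_pow, abs_neg, abs_two]
    have h2 : (4*M)/|e 0| < 2^n := hn
    have : 4 * M < 2^n * |e 0| := by
      rwa [div_lt_iff₀ hpos] at h2
    linarith [hb, (hegeom n ▸ (by rw [abs_mul, abs_pow, abs_neg, abs_two] : |(-2:ℝ)^n * e 0| = 2^n * |e 0|) : |e n| = 2^n * |e 0|)]
  have hezero : ∀ n, e n = 0 := fun n => by rw [hegeom n, he0, mul_zero]
  -- d n = a(n+1) - a n is constant
  set d : ℕ → ℝ := fun n => a (n+1) - a n with hd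
  have hdconst : ∀ n, d n = d 0 := by
    intro n
    induction n with
    | zero => rfl
    | succ n ih =>
      have := hezero n
      simp only [he] at this
      simp only [hd] at ih ⊢
      linarith
  have hlin : ∀ n, a n = a 0 + n * d 0 := by
    intro n
    induction n with
    | zero => simp
    | succ n ih =>
      have h := hdconst n
      simp only [hd] at h
      norm_num at h
      push_cast
      have hr : ((n:ℝ)+1) * (a 1 - a 0) = (n:ℝ) * (a 1 - a 0) + (a 1 - a 0) := by ring
      simp only [hd] at ih ⊢
      norm_num
      linarith [hr]
  have hd0 : d 0 = 0 := by
    by_contra h0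
    have hpos : 0 < |d 0| := abs_pos.mpr h0
    obtain ⟨n, hn⟩ := exists_nat_gt ((2*M)/|d 0|)
    have h1 : |(n:ℝ) * d 0| ≤ 2 * M := by
      have := habs n
      rw [hlin n] at this
      have h2 := habs 0
      calc |(n:ℝ) * d 0| = |a 0 + n * d 0 - a 0| := by ring_nf
        _ ≤ |a 0 + n * d 0| + |a 0| := abs_sub _ _
        _ ≤ 2 * M := by linarith
    rw [abs_mul, Nat.abs_cast] at h1
    have : (2*M)/|d 0| < n := hn
    rw [div_lt_iff₀ hpos] at this
    linarith
  have : g x = a 1 := by simp [ha]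
  rw [this]
  have := hd0
  simp only [hd] at this
  have h0 : a 0 = x := by simp [ha]
  linarith [h0 ▸ this]
end

section
/- Assume I ⊆ ℝ is a half-line (an unbounded interval different from ℝ, i.e., bounded below and unbounded above, or bounded above and unbounded below). If g : I → I is a continuous solution of g^3(x) = 3*g(x) - 2*x on I, then there exists c ∈ ℝ such that g(x) = x + c for every x ∈ I; moreover c ≤ 0 if I is unbounded below and c ≥ 0 if I is unbounded above. -/
/-- A quadratic with negative leading coefficient cannot be bounded below on ℕ. -/
lemma quad_unbdd {A B C m : ℝ} (hC : 0 < C)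
    (h : ∀ k : ℕ, m ≤ A + B * k - C * (k : ℝ) ^ 2) : False := by
  obtain ⟨n1, hn1⟩ := exists_nat_gt ((B + 1) / C)
  obtain ⟨n2, hn2⟩ := exists_nat_gt (A - m)
  set n : ℕ := max n1 n2 with hn
  have h1 : ((n1 : ℝ)) ≤ n := by exact_mod_cast Nat.le_max_left n1 n2
  have h2 : ((n2 : ℝ)) ≤ n := by exact_mod_cast Nat.le_max_right n1 n2
  have hBn : B + 1 < C * n := by
    have : (B + 1) / C < (n : ℝ) := lt_of_lt_of_le hn1 h1
    calc B + 1 = ((B+1)/C) * C := by field_simp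
    _ < (n:ℝ) * C := by
        apply mul_lt_mul_of_pos_right this hC
    _ = C * n := by ring
  have hn0 : (0:ℝ) ≤ n := Nat.cast_nonneg n
  have hq : C * (n:ℝ)^2 ≥ (B + 1) * n := by
    have := mul_le_mul_of_nonneg_right hBn.le hn0
    nlinarith
  have := h n
  nlinarith [lt_of_lt_of_le hn2 h2]

/-- Closed form for the recurrence u(n+3) = 3u(n+1) - 2u(n). -/
lemma closed_form (u : ℕ → ℝ) (hrec : ∀ n, u (n+3) = 3 * u (n+1) - 2 * u n) :
    ∀ n, u n = (u 0 - (u 0 - 2*u 1 + u 2)/9)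
      + (u 1 - u 0 + 3*((u 0 - 2*u 1 + u 2)/9)) * n
      + ((u 0 - 2*u 1 + u 2)/9) * (-2 : ℝ) ^ n := by
  set D : ℝ := (u 0 - 2*u 1 + u 2)/9 with hD
  set B : ℝ := u 1 - u 0 + 3*D with hB
  set A : ℝ := u 0 - D with hA
  set f : ℕ → ℝ := fun n => A + B * n + D * (-2:ℝ)^n with hf
  suffices h : ∀ n, u n = f n ∧ u (n+1) = f (n+1) ∧ u (n+2) = f (n+2) by
    exact fun n => (h n).1
  intro n
  induction n with
  | zero =>
    refine ⟨?_, ?_, ?_⟩ <;> simp only [hf, hA, hB, hD] <;> push_cast <;> ring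
  | succ k ih =>
    obtain ⟨h0, h1, h2⟩ := ih
    refine ⟨h1, h2, ?_⟩
    have := hrec k
    rw [h1, h0] at this
    rw [show k + 1 + 2 = k + 3 from rfl, this, hf]
    push_cast
    rw [show k + (3:ℕ) = k + 3 from rfl]
    rw [pow_add, pow_add]
    push_cast
    ring

/-- Key: if A + Bn + D(-2)^n is bounded below, then D = 0 and B ≥ 0. -/
lemma bdd_below_lin (m A B D : ℝ)
    (h : ∀ n : ℕ, m ≤ A + B * n + D * (-2:ℝ)^n) : D = 0 ∧ 0 ≤ B := by
  have hpow : ∀ k : ℕ, ((-2:ℝ))^(2*k) = 4^k := by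
    intro k; rw [pow_mul]; norm_num
  have hpow' : ∀ k : ℕ, ((-2:ℝ))^(2*k+1) = -2 * 4^k := by
    intro k; rw [pow_succ, hpow]; ring
  have hk2 : ∀ k : ℕ, (k:ℝ)^2 ≤ 4^k := by
    intro k
    have h1 : (k:ℝ) ≤ 2^k := by
      exact_mod_cast (Nat.lt_two_pow_self (n := k)).le
    have h2 : (0:ℝ) ≤ (k:ℝ) := Nat.cast_nonneg k
    calc (k:ℝ)^2 ≤ (2^k)^2 := by nlinarith
    _ = 4^k := by rw [← pow_mul, pow_mul']; norm_num
  have hB : 0 ≤ B := by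
    by_contra hB
    push_neg at hB
    obtain ⟨k, hk⟩ := exists_nat_gt ((3*A + B - 3*m) / (-6*B))
    have he := h (2*k); have ho := h (2*k+1)
    rw [hpow] at he; rw [hpow'] at ho
    push_cast at he ho
    have h6 : (3*A + B - 3*m) < (k:ℝ) * (-6*B) :=
      (div_lt_iff₀ (by linarith : (0:ℝ) < -6*B)).mp hk
    nlinarith
  constructor
  · by_contra hD
    rcases lt_or_gt_of_ne hD with hD | hD
    · -- D < 0, use even indices
      refine quad_unbdd (m := m) (A := A) (B := 2*B) (C := -D) (by linarith) (fun k => ?_)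
      have he := h (2*k); rw [hpow] at he
      have : D * 4^k ≤ D * (k:ℝ)^2 :=
        mul_le_mul_of_nonpos_left (hk2 k) hD.le
      push_cast at he
      calc m ≤ A + B * (2*k) + D * 4^k := he
      _ ≤ A + (2*B) * k - (-D) * (k:ℝ)^2 := by linarith
    · -- D > 0, use odd indices
      refine quad_unbdd (m := m) (A := A+B) (B := 2*B) (C := 2*D) (by linarith) (fun k => ?_)
      have ho := h (2*k+1); rw [hpow'] at ho
      have : -2*D * 4^k ≤ -2*D * (k:ℝ)^2 := by
        have := mul_le_mul_of_nonneg_left (hk2 k) (by linarith : (0:ℝ) ≤ 2*D)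
        linarith
      push_cast at ho
      calc m ≤ A + B * (2*k+1) + D * (-2 * 4^k) := ho
      _ ≤ (A + B) + (2*B) * k - (2*D) * (k:ℝ)^2 := by nlinarith
  · exact hB

lemma main_lower (I : Set ℝ) (hI : I.OrdConnected) (hne : I.Nonempty)
    (hbb : BddBelow I) (hab : ¬BddAbove I)
    (g : ℝ → ℝ) (hmap : Set.MapsTo g I I) (hcont : ContinuousOn g I)
    (heq : ∀ x ∈ I, g (g (g x)) = 3 * g x - 2 * x) :
    ∃ c : ℝ, 0 ≤ c ∧ ∀ x ∈ I, g x = x + c := by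
  obtain ⟨m, hm⟩ := hbb
  have hiter : ∀ n : ℕ, Set.MapsTo g^[n] I I := fun n => hmap.iterate n
  -- recurrence along orbits
  have hrec : ∀ x ∈ I, ∀ n : ℕ, g^[n+3] x = 3 * g^[n+1] x - 2 * g^[n] x := by
    intro x hx n
    have h1 : g^[n] x ∈ I := hiter n hx
    have e3 : g^[n+3] x = g (g (g (g^[n] x))) := by
      rw [show n+3 = n+1+1+1 from rfl, Function.iterate_succ_apply',
        Function.iterate_succ_apply', Function.iterate_succ_apply']
    have e1 : g^[n+1] x = g (g^[n] x) := Function.iterate_succ_apply' g n x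
    rw [e3, e1, heq _ h1]
  -- key pointwise consequence
  have hkey : ∀ x ∈ I, g (g x) = 2 * g x - x ∧ x ≤ g x := by
    intro x hx
    set u : ℕ → ℝ := fun n => g^[n] x with hu
    have hcf := closed_form u (hrec x hx)
    have hb : ∀ n : ℕ, m ≤ (u 0 - (u 0 - 2*u 1 + u 2)/9)
        + (u 1 - u 0 + 3*((u 0 - 2*u 1 + u 2)/9)) * n
        + ((u 0 - 2*u 1 + u 2)/9) * (-2 : ℝ) ^ n := by
      intro n
      rw [← hcf n]
      exact hm (hiter n hx)
    obtain ⟨hD, hB⟩ := bdd_below_lin _ _ _ _ hb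
    have hu0 : u 0 = x := rfl
    have hu1 : u 1 = g x := by simp [hu]
    have hu2 : u 2 = g (g x) := by
      simp [hu, Function.iterate_succ_apply']
    rw [hu0, hu1, hu2] at hD hB
    constructor
    · have h9 : x - 2 * g x + g (g x) = 0 := by
        field_simp at hD; linarith
      linarith
    · linarith
  -- iterates have the form x + n * (g x - x)
  have hstep : ∀ x ∈ I, ∀ n : ℕ, g (g^[n] x) - g^[n] x = g x - x := by
    intro x hx n
    induction n with
    | zero => simp
    | succ k ih =>
      rw [Function.iterate_succ_apply']
      have hk : g^[k] x ∈ I := hiter k hx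
      have := (hkey _ hk).1
      linarith [ih]
  have hform : ∀ x ∈ I, ∀ n : ℕ, g^[n] x = x + n * (g x - x) := by
    intro x hx n
    induction n with
    | zero => simp
    | succ k ih =>
      rw [Function.iterate_succ_apply']
      have := hstep x hx k
      push_cast
      linarith [ih]
  -- injectivity
  have hinj : Set.InjOn g I := by
    intro a ha b hb hgab
    have h1 := (hkey a ha).1
    have h2 := (hkey b hb).1
    rw [hgab] at h1
    rw [h1] at h2
    linarith
  -- strict monotonicity
  have hmono : ∀ a ∈ I, ∀ b ∈ I, a < b → g a < g b := by
    intro a ha b hb hlt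
    obtain ⟨z, hz, hzgt⟩ := not_bddAbove_iff.mp hab (max b (g a))
    have hbz : b ≤ z := le_of_lt (lt_of_le_of_lt (le_max_left _ _) hzgt)
    have haz : a ≤ z := le_trans hlt.le hbz
    have hsub : Set.Icc a z ⊆ I := hI.out ha hz
    rcases ContinuousOn.strictMonoOn_of_injOn_Icc' haz (hcont.mono hsub)
        (hinj.mono hsub) with hmo | han
    · exact hmo (Set.left_mem_Icc.mpr haz) ⟨hlt.le, hbz⟩ hlt
    · exfalso
      have hlt2 : a < z := lt_of_lt_of_le hlt hbz
      have hgz := han (Set.left_mem_Icc.mpr haz) (Set.right_mem_Icc.mpr haz) hlt2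
      have hz2 : g a < g z :=
        lt_of_lt_of_le (lt_of_le_of_lt (le_max_right b (g a)) hzgt) (hkey z hz).2
      linarith
  -- monotone iterates
  have hitmono : ∀ a ∈ I, ∀ b ∈ I, a < b → ∀ n : ℕ, g^[n] a < g^[n] b := by
    intro a ha b hb hlt n
    induction n with
    | zero => simpa
    | succ k ih =>
      rw [Function.iterate_succ_apply', Function.iterate_succ_apply']
      exact hmono _ (hiter k ha) _ (hiter k hb) ih
  -- h is nondecreasing
  have hnd : ∀ a ∈ I, ∀ b ∈ I, a ≤ b → g a - a ≤ g b - b := by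
    intro a ha b hb hle
    rcases eq_or_lt_of_le hle with rfl | hlt
    · exact le_refl _
    · by_contra hc
      push_neg at hc
      obtain ⟨n, hn⟩ := exists_nat_gt ((b - a) / ((g a - a) - (g b - b)))
      have hpos : (0:ℝ) < (g a - a) - (g b - b) := by linarith
      have h1 : b - a < n * ((g a - a) - (g b - b)) := by
        rw [div_lt_iff₀ hpos] at hn
        linarith
      have h2 := hitmono a ha b hb hlt n
      rw [hform a ha n, hform b hb n] at h2
      nlinarith
  -- points with positive h propagate their value to the right
  have hprop : ∀ a ∈ I, ∀ b ∈ I, a ≤ b → 0 < g a - a → g b - b = g a - a := by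
    intro a ha b hb hle hpos
    refine le_antisymm ?_ (hnd a ha b hb hle)
    obtain ⟨n, hn⟩ := exists_nat_gt ((b - a) / (g a - a))
    have h1 : b - a < n * (g a - a) := by
      rw [div_lt_iff₀ hpos] at hn
      linarith
    have hmem : g^[n] a ∈ I := hiter n ha
    have hval : g^[n] a = a + n * (g a - a) := hform a ha n
    have hble : b ≤ g^[n] a := by rw [hval]; linarith
    have := hnd b hb _ hmem hble
    have h2 := hstep a ha n
    linarith
  -- h is constant
  obtain ⟨x0, hx0⟩ := hne
  refine ⟨g x0 - x0, by linarith [(hkey x0 hx0).2], ?_⟩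
  have hconst : ∀ a ∈ I, ∀ b ∈ I, a ≤ b → g a - a = g b - b := by
    intro a ha b hb hle
    by_contra hc
    have hlt : g a - a < g b - b := lt_of_le_of_ne (hnd a ha b hb hle) hc
    have ha0 : g a - a = 0 := by
      rcases lt_or_eq_of_le ((hkey a ha).2) with h | h
      · exact absurd (hprop a ha b hb hle (by linarith)).symm hc
      · linarith
    have hbpos : 0 < g b - b := by linarith
    -- intermediate value
    have hsub : Set.Icc a b ⊆ I := hI.out ha hb
    have hcont2 : ContinuousOn (fun t => g t - t) (Set.Icc a b) :=
      (hcont.mono hsub).sub continuousOn_id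
    have hivt := intermediate_value_Icc hle hcont2
    have hmem2 : (g b - b) / 2 ∈ Set.Icc (g a - a) (g b - b) := by
      constructor <;> [linarith; linarith]
    obtain ⟨t, ht, hteq0⟩ := hivt hmem2
    have hteq : g t - t = (g b - b) / 2 := hteq0
    have htI : t ∈ I := hsub ht
    have htpos : 0 < g t - t := by rw [hteq]; linarith
    have h5 := hprop t htI b hb ht.2 htpos
    rw [hteq] at h5
    linarith
  intro x hx
  rcases le_total x0 x with h | h
  · have := hconst x0 hx0 x hx h; linarith
  · have := hconst x hx x0 hx0 h; linarith

/-- If `I ⊆ ℝ` is a half-line (bounded below and unbounded above, or bounded above and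
unbounded below) and `g : I → I` is a continuous solution of `g∘g∘g (x) = 3 g(x) - 2 x`
on `I`, then `g(x) = x + c` on `I` for some `c ∈ ℝ`; moreover `c ≤ 0` if `I` is
unbounded below and `c ≥ 0` if `I` is unbounded above. -/
theorem stmt_12 (I : Set ℝ) (hI : I.OrdConnected) (hnd : I.Nontrivial)
    (hhalf : (BddBelow I ∧ ¬BddAbove I) ∨ (BddAbove I ∧ ¬BddBelow I))
    (g : ℝ → ℝ) (hmap : Set.MapsTo g I I) (hcont : ContinuousOn g I)
    (heq : ∀ x ∈ I, g (g (g x)) = 3 * g x - 2 * x) :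
    ∃ c : ℝ, (∀ x ∈ I, g x = x + c) ∧
      (¬BddBelow I → c ≤ 0) ∧ (¬BddAbove I → 0 ≤ c) := by
  rcases hhalf with ⟨hbb, hab⟩ | ⟨hA, hB⟩
  · obtain ⟨c, hc0, hc⟩ := main_lower I hI hnd.nonempty hbb hab g hmap hcont heq
    exact ⟨c, hc, fun h => absurd hbb h, fun _ => hc0⟩
  · -- reflect
    set J : Set ℝ := (fun x : ℝ => -x) ⁻¹' I with hJ
    have hmemJ : ∀ x : ℝ, x ∈ J ↔ -x ∈ I := fun x => Iff.rfl
    have hmemJ' : ∀ y : ℝ, y ∈ I → -y ∈ J := by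
      intro y hy; rw [hmemJ, neg_neg]; exact hy
    have hJord : J.OrdConnected := by
      constructor
      intro x hx y hy z hz
      rw [hmemJ]
      have : -z ∈ Set.Icc (-y) (-x) := ⟨by linarith [hz.2], by linarith [hz.1]⟩
      exact hI.out hy hx this
    have hJne : J.Nonempty := by
      obtain ⟨y, hy⟩ := hnd.nonempty
      exact ⟨-y, hmemJ' y hy⟩
    have hJbb : BddBelow J := by
      obtain ⟨M, hM⟩ := hA
      exact ⟨-M, fun x hx => by have h2 : -x ≤ M := hM hx; linarith⟩
    have hJab : ¬BddAbove J := by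
      rintro ⟨M, hM⟩
      exact hB ⟨-M, fun y hy => by have h2 : -y ≤ M := hM (hmemJ' y hy); linarith⟩
    set g' : ℝ → ℝ := fun x => -g (-x) with hg'
    have hg'map : Set.MapsTo g' J J := by
      intro x hx
      rw [hmemJ] at hx ⊢
      simp only [hg', neg_neg]
      exact hmap hx
    have hg'cont : ContinuousOn g' J := by
      apply ContinuousOn.neg
      exact hcont.comp continuous_neg.continuousOn (fun x hx => hx)
    have hg'eq : ∀ x ∈ J, g' (g' (g' x)) = 3 * g' x - 2 * x := by
      intro x hx
      rw [hmemJ] at hx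
      simp only [hg', neg_neg]
      have := heq (-x) hx
      rw [this]
      ring
    obtain ⟨c, hc0, hc⟩ := main_lower J hJord hJne hJbb hJab g' hg'map hg'cont hg'eq
    refine ⟨-c, ?_, fun _ => by linarith, fun h => absurd hA h⟩
    intro y hy
    have := hc (-y) (hmemJ' y hy)
    simp only [hg', neg_neg] at this
    linarith
end

section
/- If g : ℝ → ℝ is a continuous function satisfying g^3(x) = 3*g(x) - 2*x for all x ∈ ℝ, then there exists c ∈ ℝ such that either g(x) = x + c for every x ∈ ℝ, or g(x) = -2*x + c for every x ∈ ℝ. -/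
lemma aux_mono (g : ℝ → ℝ) (hcont : Continuous g) (hmono : StrictMono g)
    (heq : ∀ x : ℝ, g (g (g x)) = 3 * g x - 2 * x) :
    ∃ c : ℝ, ∀ x : ℝ, g x = x + c := by
  -- Step 1: g (g x) - g x = g x - x for all x
  have key : ∀ x : ℝ, g (g x) + x = 2 * g x := by
    intro x
    by_contra hne
    set d : ℕ → ℝ := fun n => g^[n+1] x - g^[n] x with hd
    have hit' : ∀ n : ℕ, g^[n+1] x = g (g^[n] x) := fun n =>
      Function.iterate_succ_apply' g n x
    have hrec : ∀ n, d (n+2) = 2 * d n - d (n+1) := by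
      intro n
      have h3 : g^[n+3] x = g (g (g (g^[n] x))) := by
        rw [show n+3 = (n+2)+1 by ring, hit', show n+2 = (n+1)+1 by ring, hit', hit']
      have := heq (g^[n] x)
      simp only [hd]
      rw [show n+2+1 = n+3 by ring, h3, this, hit' (n+1), hit' n]
      ring
    set K := (2 * d 0 + d 1) / 3 with hK
    set m := (d 0 - d 1) / 3 with hm
    have hform : ∀ n, d n = K + m * (-2)^n := by
      have H : ∀ n, d n = K + m * (-2)^n ∧ d (n+1) = K + m * (-2)^(n+1) := by
        intro n
        induction n with
        | zero => constructor <;> simp [hK, hm] <;> ring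
        | succ k ih =>
          refine ⟨ih.2, ?_⟩
          rw [hrec k, ih.1, ih.2]
          ring
      exact fun n => (H n).1
    have hm0 : m ≠ 0 := by
      intro h
      apply hne
      have hd0 : d 0 = d 1 := by
        have : d 0 - d 1 = 0 := by
          have := hm.symm.trans h
          field_simp at this
          linarith
        linarith
      have h0 : d 0 = g x - x := by simp [hd]
      have h1 : d 1 = g (g x) - g x := by
        simp only [hd]
        rw [hit' 1, hit' 0, Function.iterate_zero_apply]
      rw [h0, h1] at hd0
      linarith
    -- all d n have the same (weak) sign
    have hsign : (∀ n, 0 ≤ d n) ∨ (∀ n, d n ≤ 0) := by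
      rcases le_total 0 (d 0) with h0 | h0
      · left
        intro n
        induction n with
        | zero => exact h0
        | succ k ih =>
          have : g^[k] x ≤ g^[k+1] x := by simpa [hd] using ih
          have := hmono.monotone this
          rw [← hit' k, ← hit' (k+1)] at this
          simpa [hd] using this
      · right
        intro n
        induction n with
        | zero => exact h0
        | succ k ih =>
          have : g^[k+1] x ≤ g^[k] x := by simpa [hd] using ih
          have := hmono.monotone this
          rw [← hit' k, ← hit' (k+1)] at this
          simpa [hd] using this
    obtain ⟨n, hn⟩ := pow_unbounded_of_one_lt (|K| / |m|) (by norm_num : (1:ℝ) < 2)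
    have hmpos : 0 < |m| := abs_pos.mpr hm0
    have hKlt : |K| < |m| * 2^n := by
      rw [div_lt_iff₀ hmpos] at hn
      linarith [hn]
    set t := m * (-2:ℝ)^n with ht
    have habs : |t| = |m| * 2^n := by
      rw [ht, abs_mul, abs_pow, abs_neg, abs_two]
    have hKt : |K| < |t| := by rw [habs]; exact hKlt
    have hdn : d n = K + t := hform n
    have hdn1 : d (n+1) = K - 2 * t := by
      rw [hform (n+1)]; rw [ht]; ring
    have hKabs := abs_lt.mp hKt
    rcases le_or_gt 0 t with hts | hts
    · rw [abs_of_nonneg hts] at hKabs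
      have ht1 : 0 < d n := by rw [hdn]; linarith
      have ht2 : d (n+1) < 0 := by rw [hdn1]; linarith
      rcases hsign with hs | hs
      · linarith [hs (n+1)]
      · linarith [hs n]
    · rw [abs_of_neg hts] at hKabs
      have ht1 : d n < 0 := by rw [hdn]; linarith
      have ht2 : 0 < d (n+1) := by rw [hdn1]; linarith
      rcases hsign with hs | hs
      · linarith [hs n]
      · linarith [hs (n+1)]
  -- u := g - id is invariant under g
  have hu : ∀ x : ℝ, g (g x) - g x = g x - x := by
    intro x; have := key x; linarith
  -- iterates are arithmetic progressions
  have huit : ∀ (n : ℕ) (x : ℝ), g (g^[n] x) - g^[n] x = g x - x := by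
    intro n
    induction n with
    | zero => intro x; simp
    | succ k ih =>
      intro x
      rw [Function.iterate_succ_apply' g k x]
      rw [hu (g^[k] x), ih x]
  have hit : ∀ (n : ℕ) (x : ℝ), g^[n] x = x + n * (g x - x) := by
    intro n
    induction n with
    | zero => intro x; simp
    | succ k ih =>
      intro x
      rw [Function.iterate_succ_apply' g k x]
      have h1 : g (g^[k] x) = g^[k] x + (g x - x) := by
        have := huit k x; linarith
      rw [h1, ih x]
      push_cast
      ring
  -- u is monotone
  have humono : Monotone (fun x => g x - x) := by
    intro a b hab
    by_contra hc
    push_neg at hc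
    obtain ⟨n, hn⟩ := exists_nat_gt ((b - a) / ((g a - a) - (g b - b)))
    have hmono_n := (hmono.monotone.iterate n) hab
    rw [hit n a, hit n b] at hmono_n
    have hpos : 0 < (g a - a) - (g b - b) := by linarith
    rw [div_lt_iff₀ hpos] at hn
    nlinarith
  -- u is constant
  have huconst : ∀ a b : ℝ, g a - a = g b - b := by
    have main : ∀ a b : ℝ, g a - a < g b - b → False := by
      intro a b hab
      have hucont : Continuous (fun x => g x - x) := hcont.sub continuous_id
      -- pick nonzero v strictly between
      obtain ⟨v, hv0, hva, hvb⟩ : ∃ v : ℝ, v ≠ 0 ∧ g a - a < v ∧ v < g b - b := by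
        rcases lt_or_ge 0 (g b - b) with hb | hb
        · refine ⟨(max (g a - a) 0 + (g b - b)) / 2, ?_, ?_, ?_⟩
          · have : 0 ≤ max (g a - a) 0 := le_max_right _ _
            positivity
          · have h1 : g a - a ≤ max (g a - a) 0 := le_max_left _ _
            rcases max_cases (g a - a) 0 with ⟨h, _⟩ | ⟨h, _⟩ <;> rw [h] <;> linarith
          · rcases max_cases (g a - a) 0 with ⟨h, _⟩ | ⟨h, _⟩ <;> rw [h] <;> linarith
        · have ha : g a - a < 0 := by linarith
          exact ⟨(g a - a + (g b - b)) / 2, by intro h; nlinarith, by linarith, by linarith⟩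
      -- v is attained
      obtain ⟨z, hz⟩ : ∃ z : ℝ, g z - z = v := by
        have hmem : v ∈ Set.Icc ((fun x => g x - x) a) ((fun x => g x - x) b) :=
          ⟨le_of_lt hva, le_of_lt hvb⟩
        obtain ⟨z, hz⟩ := intermediate_value_univ a b hucont hmem
        exact ⟨z, hz⟩
      rcases hv0.lt_or_gt with hvneg | hvpos
      · -- v < 0 : orbit of z goes to -∞, below a
        obtain ⟨n, hn⟩ := exists_nat_gt ((z - a) / (-v))
        have hle : z + n * v ≤ a := by
          rw [div_lt_iff₀ (by linarith : (0:ℝ) < -v)] at hn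
          nlinarith
        have := humono hle
        simp only at this
        have hzn : g (z + n * v) - (z + n * v) = v := by
          have h1 := hit n z
          have h2 := huit n z
          rw [hz] at h1 h2
          rw [← h1]
          exact h2
        rw [hzn] at this
        linarith
      · -- v > 0 : orbit of z goes to +∞, above b
        obtain ⟨n, hn⟩ := exists_nat_gt ((b - z) / v)
        have hle : b ≤ z + n * v := by
          rw [div_lt_iff₀ hvpos] at hn
          nlinarith
        have := humono hle
        simp only at this
        have hzn : g (z + n * v) - (z + n * v) = v := by
          have h1 := hit n z
          have h2 := huit n z
          rw [hz] at h1 h2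
          rw [← h1]
          exact h2
        rw [hzn] at this
        linarith
    intro a b
    by_contra hne
    rcases lt_or_gt_of_ne hne with h | h
    · exact main a b h
    · exact main b a h
  exact ⟨g 0 - 0, fun x => by have := huconst x 0; linarith⟩


lemma aux_anti (g : ℝ → ℝ) (hcont : Continuous g) (hanti : StrictAnti g)
    (heq : ∀ x : ℝ, g (g (g x)) = 3 * g x - 2 * x) :
    ∃ c : ℝ, ∀ x : ℝ, g x = -2 * x + c := by
  have hinj : Function.Injective g := hanti.injective
  -- surjectivity
  have hsurj : Function.Surjective g := by
    intro yv
    set x1 := max 0 ((3 * g 0 - yv) / 2) with hx1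
    set x2 := min 0 ((3 * g 0 - yv) / 2) with hx2
    have h1 : g (g (g x1)) ≤ yv := by
      rw [heq]
      have ha : g x1 ≤ g 0 := hanti.antitone (le_max_left _ _)
      have hb : (3 * g 0 - yv) / 2 ≤ x1 := le_max_right _ _
      linarith
    have h2 : yv ≤ g (g (g x2)) := by
      rw [heq]
      have ha : g 0 ≤ g x2 := hanti.antitone (min_le_left _ _)
      have hb : x2 ≤ (3 * g 0 - yv) / 2 := min_le_right _ _
      linarith
    exact intermediate_value_univ (g (g x1)) (g (g x2)) hcont ⟨h1, h2⟩
  set s := Function.surjInv hsurj with hs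
  have hgs : ∀ y, g (s y) = y := fun y => Function.surjInv_eq hsurj y
  -- the backward orbit machinery
  have orbit : ∀ x : ℝ, ∃ Y : ℕ → ℝ, Y 0 = g (g x) ∧ Y 1 = g x ∧ Y 2 = x ∧
      (∀ n, g (Y (n+1)) = Y n) := by
    intro x
    refine ⟨fun n => s^[n] (g (g x)), by simp, ?_, ?_, ?_⟩
    · show s^[1] (g (g x)) = g x
      simp only [Function.iterate_one]
      apply hinj
      rw [hgs]
    · show s^[2] (g (g x)) = x
      have h1 : s^[1] (g (g x)) = g x := by
        simp only [Function.iterate_one]; apply hinj; rw [hgs]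
      have : s^[2] (g (g x)) = s (s^[1] (g (g x))) := Function.iterate_succ_apply' s 1 _
      rw [this, h1]
      apply hinj
      rw [hgs]
    · intro n
      show g (s^[n+1] (g (g x))) = s^[n] (g (g x))
      have : s^[n+1] (g (g x)) = s (s^[n] (g (g x))) := Function.iterate_succ_apply' s n _
      rw [this, hgs]
  -- key identity : g (g x) = 2 * x - g x
  have hkey : ∀ x : ℝ, g (g x) = 2 * x - g x := by
    intro x
    obtain ⟨Y, hY0, hY1, hY2, hYs⟩ := orbit x
    set D : ℕ → ℝ := fun n => Y n - Y (n+1) with hD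
    have hrecY : ∀ n, Y n = 3 * Y (n+2) - 2 * Y (n+3) := by
      intro n
      have : g (g (g (Y (n+3)))) = 3 * g (Y (n+3)) - 2 * Y (n+3) := heq _
      rw [hYs (n+2), hYs (n+1), hYs n] at this
      linarith
    have hrec : ∀ n, D (n+2) = (D n + D (n+1)) / 2 := by
      intro n
      simp only [hD]
      have h1 := hrecY n
      linarith
    set K := (D 0 + 2 * D 1) / 3 with hK
    set m := 2 * (D 0 - D 1) / 3 with hm
    have hform : ∀ n, D n = K + m * (-1/2)^n := by
      have H : ∀ n, D n = K + m * (-1/2)^n ∧ D (n+1) = K + m * (-1/2)^(n+1) := by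
        intro n
        induction n with
        | zero => constructor <;> simp [hK, hm] <;> ring
        | succ k ih =>
          refine ⟨ih.2, ?_⟩
          rw [hrec k, ih.1, ih.2]
          ring
      exact fun n => (H n).1
    -- alternation
    have halt : ∀ n, D n * D (n+1) ≤ 0 := by
      intro n
      have hDn : D n = g (Y (n+1)) - g (Y (n+2)) := by
        simp only [hD]; rw [hYs n, hYs (n+1)]
      rcases lt_trichotomy (Y (n+1)) (Y (n+2)) with h | h | h
      · have h1 : 0 < D n := by rw [hDn]; linarith [hanti h]
        have h2 : D (n+1) < 0 := by simp only [hD]; linarith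
        nlinarith
      · have h1 : D n = 0 := by rw [hDn, h]; ring
        rw [h1]; ring_nf; rfl
      · have h1 : D n < 0 := by rw [hDn]; linarith [hanti h]
        have h2 : 0 < D (n+1) := by simp only [hD]; linarith
        nlinarith
    -- K = 0
    have hK0 : K = 0 := by
      by_contra hKne
      have hKpos : 0 < |K| := abs_pos.mpr hKne
      obtain ⟨n, hn⟩ := pow_unbounded_of_one_lt (|m| / |K|) (by norm_num : (1:ℝ) < 2)
      have hsmall : ∀ k, n ≤ k → |m * (-1/2)^k| < |K| := by
        intro k hk
        rw [abs_mul, abs_pow]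
        have : |(-1/2 : ℝ)| = 1/2 := by norm_num
        rw [this]
        rw [div_lt_iff₀ hKpos] at hn
        have h2 : (1/2 : ℝ)^k ≤ (1/2)^n :=
          pow_le_pow_of_le_one (by norm_num) (by norm_num) hk
        have h3 : (1/2 : ℝ)^n * 2^n = 1 := by
          rw [← mul_pow]; norm_num
        have h4 : (0:ℝ) < 2^n := by positivity
        have h5 : |m| * (1/2)^n < |K| := by
          rw [show |m| * (1/2)^n = (|m| * (1/2)^n * 2^n) / 2^n by field_simp]
          rw [div_lt_iff₀ h4]
          calc |m| * (1/2)^n * 2^n = |m| := by rw [mul_assoc, h3, mul_one]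
          _ < |K| * 2^n := by linarith [hn]
        have hm0 : (0:ℝ) ≤ |m| := abs_nonneg m
        nlinarith [pow_nonneg (by norm_num : (0:ℝ) ≤ 1/2) k, pow_nonneg (by norm_num : (0:ℝ) ≤ 1/2) n]
      have hprod := halt n
      rw [hform n, hform (n+1)] at hprod
      have ha := abs_lt.mp (hsmall n le_rfl)
      have hb := abs_lt.mp (hsmall (n+1) (Nat.le_succ n))
      rcases lt_or_gt_of_ne hKne with h | h
      · rw [abs_of_neg h] at ha hb
        have h1 : K + m * (-1/2)^n < 0 := by linarith [ha.2]
        have h2 : K + m * (-1/2)^(n+1) < 0 := by linarith [hb.2]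
        nlinarith [mul_pos_of_neg_of_neg h1 h2]
      · rw [abs_of_pos h] at ha hb
        have h1 : 0 < K + m * (-1/2)^n := by linarith [ha.1]
        have h2 : 0 < K + m * (-1/2)^(n+1) := by linarith [hb.1]
        nlinarith [mul_pos h1 h2]
    -- conclude
    have h0 := hform 0
    have h1 := hform 1
    rw [hK0] at h0 h1
    have hD0 : D 0 = m := by rw [h0]; ring
    have hD1 : D 1 = -m/2 := by rw [h1]; ring
    have e0 : Y 0 - Y 1 = m := hD0
    have e1 : Y 1 - Y 2 = -m/2 := hD1
    rw [hY0] at e0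
    rw [hY1] at e0 e1
    rw [hY2] at e1
    linarith
  -- p := g + 2·id is g-invariant
  have hp : ∀ y : ℝ, g (g y) + 2 * g y = g y + 2 * y := by
    intro y; rw [hkey y]; ring
  -- every point's p-value equals 3 * (some fixed point)
  have hfix : ∀ x : ℝ, ∃ L : ℝ, g L = L ∧ g x + 2 * x = 3 * L := by
    intro x
    obtain ⟨Y, hY0, hY1, hY2, hYs⟩ := orbit x
    have hDrec : ∀ n, Y n - Y (n+1) = (Y 0 - Y 1) * (-1/2)^n := by
      intro n
      induction n with
      | zero => simp
      | succ k ih =>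
        have h := hkey (Y (k+2))
        rw [hYs (k+1), hYs k] at h
        have h3 : Y (k+1) - Y (k+2) = -(Y k - Y (k+1)) / 2 := by linarith
        rw [h3, ih]; ring
    set L := Y 0 - 2 * (Y 0 - Y 1) / 3 with hL
    have hYform : ∀ n, Y n = L + (2 * (Y 0 - Y 1) / 3) * (-1/2)^n := by
      intro n
      induction n with
      | zero => simp [hL]
      | succ k ih =>
        have h1 := hDrec k
        have h2 : Y (k+1) = Y k - (Y 0 - Y 1) * (-1/2)^k := by linarith
        rw [h2, ih]; ring
    have hpow : Filter.Tendsto (fun n : ℕ => ((-1:ℝ)/2)^n) Filter.atTop (nhds 0) :=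
      tendsto_pow_atTop_nhds_zero_of_abs_lt_one (by rw [abs_div]; norm_num)
    have hYlim : Filter.Tendsto Y Filter.atTop (nhds L) := by
      have h : Filter.Tendsto (fun n : ℕ => L + 2 * (Y 0 - Y 1) / 3 * ((-1:ℝ)/2)^n)
          Filter.atTop (nhds (L + 2 * (Y 0 - Y 1) / 3 * 0)) :=
        tendsto_const_nhds.add (tendsto_const_nhds.mul hpow)
      rw [mul_zero, add_zero] at h
      exact h.congr (fun n => (hYform n).symm)
    have hshift : Filter.Tendsto (fun n => Y (n+1)) Filter.atTop (nhds L) :=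
      hYlim.comp (Filter.tendsto_add_atTop_nat 1)
    have hgL : g L = L := by
      have h1 : Filter.Tendsto (fun n => g (Y (n+1))) Filter.atTop (nhds (g L)) :=
        (hcont.tendsto L).comp hshift
      have h2 : Filter.Tendsto (fun n => g (Y (n+1))) Filter.atTop (nhds L) := by
        have := hYlim.congr (fun n => (hYs n).symm)
        exact this
      exact tendsto_nhds_unique h1 h2
    have hpY : ∀ n, g (Y n) + 2 * Y n = g (Y 0) + 2 * Y 0 := by
      intro n
      induction n with
      | zero => rfl
      | succ k ih =>
        have h := hp (Y (k+1))
        rw [hYs k] at h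
        rw [hYs k]
        linarith
    have hplim : Filter.Tendsto (fun n => g (Y n) + 2 * Y n) Filter.atTop
        (nhds (g L + 2 * L)) := by
      have h1 : Filter.Tendsto (fun n => g (Y n)) Filter.atTop (nhds (g L)) :=
        (hcont.tendsto L).comp hYlim
      exact h1.add (hYlim.const_mul 2)
    have hconst : Filter.Tendsto (fun _ : ℕ => g (Y 0) + 2 * Y 0) Filter.atTop
        (nhds (g (Y 0) + 2 * Y 0)) := tendsto_const_nhds
    have heqlim : g (Y 0) + 2 * Y 0 = g L + 2 * L := by
      refine tendsto_nhds_unique ?_ hplim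
      exact hconst.congr (fun n => (hpY n).symm)
    refine ⟨L, hgL, ?_⟩
    have h2 := hpY 2
    rw [hY2] at h2
    rw [hgL] at heqlim
    linarith
  obtain ⟨L0, hgL0, _⟩ := hfix 0
  refine ⟨3 * L0, fun x => ?_⟩
  obtain ⟨L, hgL, hx⟩ := hfix x
  have hLL : L = L0 := by
    rcases lt_trichotomy L L0 with h | h | h
    · have := hanti h; rw [hgL, hgL0] at this; linarith
    · exact h
    · have := hanti h; rw [hgL, hgL0] at this; linarith
  rw [hLL] at hx
  linarith

/-- If `g : ℝ → ℝ` is a continuous solution of `g∘g∘g (x) = 3 g(x) - 2 x` on `ℝ`, then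
there is `c ∈ ℝ` such that either `g(x) = x + c` for all `x`, or `g(x) = -2x + c`
for all `x`. -/
theorem stmt_13 (g : ℝ → ℝ) (hcont : Continuous g)
    (heq : ∀ x : ℝ, g (g (g x)) = 3 * g x - 2 * x) :
    ∃ c : ℝ, (∀ x : ℝ, g x = x + c) ∨ (∀ x : ℝ, g x = -2 * x + c) := by
  have hinj : Function.Injective g := by
    intro a b hab
    have h1 := heq a
    have h2 := heq b
    rw [hab, h2] at h1
    linarith
  rcases hcont.strictMono_of_inj hinj with hmono | hanti
  · obtain ⟨c, hc⟩ := aux_mono g hcont hmono heq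
    exact ⟨c, Or.inl hc⟩
  · obtain ⟨c, hc⟩ := aux_anti g hcont hanti heq
    exact ⟨c, Or.inr hc⟩
end

section
/- Let g : ℝ → ℝ be a continuous, strictly decreasing bijective solution of g^3(x) = 3*g(x) - 2*x on ℝ, and let G = g^{-1} be its inverse. Then 2*G(G(x)) - G(x) - x = 0 for every x ∈ ℝ. -/
/-- Let `g : ℝ → ℝ` be a continuous, strictly decreasing bijective solution of
`g∘g∘g (x) = 3 g(x) - 2 x` on `ℝ`, and let `G` be its inverse. Then
`2 G(G x) - G x - x = 0` for every `x ∈ ℝ`. -/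
theorem stmt_14 (g : ℝ → ℝ) (hcont : Continuous g) (hanti : StrictAnti g)
    (hbij : Function.Bijective g)
    (heq : ∀ x : ℝ, g (g (g x)) = 3 * g x - 2 * x)
    (G : ℝ → ℝ) (hGl : Function.LeftInverse G g) (hGr : Function.RightInverse G g) :
    ∀ x : ℝ, 2 * G (G x) - G x - x = 0 := by
  -- Key identity: g (g y) = 3 y - 2 G y
  have key : ∀ y : ℝ, g (g y) = 3 * y - 2 * G y := by
    intro y
    have h := heq (G y)
    rw [hGr y] at h
    exact h
  -- G is strictly decreasing
  have hGanti : StrictAnti G := by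
    intro a b hab
    rcases lt_trichotomy (G b) (G a) with h | h | h
    · exact h
    · exfalso
      have hba : g (G b) = g (G a) := by rw [h]
      rw [hGr, hGr] at hba
      exact (ne_of_lt hab) hba.symm
    · exfalso
      have hba := hanti h
      rw [hGr, hGr] at hba
      exact absurd hab (not_lt.mpr (le_of_lt hba))
  -- E(y) := g(g y) + g y - 2 y is invariant under G
  have Einv : ∀ y : ℝ, g (g (G y)) + g (G y) - 2 * G y = g (g y) + g y - 2 * y := by
    intro y
    have h1 : g (G y) = y := hGr y
    have h2 : g (g y) = 3 * y - 2 * G y := key y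
    rw [h1, h2]
    ring
  intro x
  have k2 := key (G x)
  rw [hGr x] at k2
  have kx := key x
  -- It suffices to show E x = 0
  suffices hEx : g (g x) + g x - 2 * x = 0 by
    linarith
  by_contra he
  obtain ⟨e, hedef⟩ : ∃ e : ℝ, e = g (g x) + g x - 2 * x := ⟨_, rfl⟩
  rw [← hedef] at he
  have hepos : (0 : ℝ) < |e| := abs_pos.mpr he
  -- backward orbit
  obtain ⟨y, hy⟩ : ∃ y : ℕ → ℝ, y = fun n => G^[n] x := ⟨_, rfl⟩
  have hy1 : ∀ n, y (n + 1) = G (y n) := by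
    intro n
    simp only [hy, Function.iterate_succ_apply']
  have hgy : ∀ n, g (y (n + 1)) = y n := by
    intro n
    rw [hy1]
    exact hGr _
  have hEn : ∀ n, g (g (y n)) + g (y n) - 2 * y n = e := by
    intro n
    induction n with
    | zero => simp [hy, hedef]
    | succ n ih => rw [hy1, Einv, ih]
  obtain ⟨d, hdn⟩ : ∃ d : ℕ → ℝ, ∀ n, d n = y (n + 1) - y n :=
    ⟨fun n => y (n + 1) - y n, fun n => rfl⟩
  have hd : ∀ n, d n + 2 * d (n + 1) = -e := by
    intro n
    have h := hEn (n + 2)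
    have h1 : g (y (n + 2)) = y (n + 1) := hgy (n + 1)
    have h2 : g (g (y (n + 2))) = y n := by rw [h1]; exact hgy n
    rw [h2, h1] at h
    rw [hdn, hdn]
    have h3 : y (n + 1 + 1) = y (n + 2) := by norm_num
    rw [h3]
    linarith
  -- deviation halves each step
  have hrec : ∀ n, d (n + 1) + e / 3 = -((d n + e / 3) / 2) := by
    intro n
    have h := hd n
    linarith
  have hdev : ∀ n, |d n + e / 3| = (1 / 2 : ℝ) ^ n * |d 0 + e / 3| := by
    intro n
    induction n with
    | zero => simp
    | succ n ih =>
      rw [hrec n, abs_neg, abs_div, ih]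
      rw [show |(2 : ℝ)| = 2 by norm_num]
      ring
  -- find n where deviation is small
  have hCpos : (0 : ℝ) < |d 0 + e / 3| + 1 := by positivity
  obtain ⟨n, hn⟩ := exists_pow_lt_of_lt_one
    (show (0 : ℝ) < |e| / 3 / (|d 0 + e / 3| + 1) by positivity)
    (show (1 / 2 : ℝ) < 1 by norm_num)
  have hsmall : (1 / 2 : ℝ) ^ n * |d 0 + e / 3| < |e| / 3 := by
    have h1 := mul_lt_mul_of_pos_right hn hCpos
    rw [div_mul_cancel₀ _ (ne_of_gt hCpos)] at h1
    have h2 : (1 / 2 : ℝ) ^ n * |d 0 + e / 3| ≤ (1 / 2 : ℝ) ^ n * (|d 0 + e / 3| + 1) := by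
      have hp : (0 : ℝ) ≤ (1 / 2 : ℝ) ^ n := by positivity
      nlinarith
    linarith
  have h1 : |d n + e / 3| < |e| / 3 := by rw [hdev]; exact hsmall
  have h2 : |d (n + 1) + e / 3| < |e| / 3 := by
    rw [hdev, pow_succ]
    have hC : (0 : ℝ) ≤ |d 0 + e / 3| := abs_nonneg _
    have hp : (0 : ℝ) ≤ (1 / 2 : ℝ) ^ n := by positivity
    nlinarith
  -- alternation from strict antitonicity of G
  have alt : ∀ n, (d n < 0 → 0 < d (n + 1)) ∧ (0 < d n → d (n + 1) < 0) := by
    intro m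
    have hm2 : y (m + 1 + 1) = y (m + 2) := by norm_num
    constructor
    · intro hneg
      rw [hdn] at hneg
      have hlt : y (m + 1) < y m := by linarith
      have hGlt := hGanti hlt
      rw [← hy1, ← hy1] at hGlt
      rw [hdn]
      linarith
    · intro hpos
      rw [hdn] at hpos
      have hlt : y m < y (m + 1) := by linarith
      have hGlt := hGanti hlt
      rw [← hy1, ← hy1] at hGlt
      rw [hdn]
      linarith
  obtain ⟨ha1, ha2⟩ := abs_lt.mp h1
  obtain ⟨hb1, hb2⟩ := abs_lt.mp h2
  rcases lt_or_gt_of_ne he with hneg | hpos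
  · -- e < 0 : d n > 0 and d (n+1) > 0, contradiction
    have habs : |e| = -e := abs_of_neg hneg
    rw [habs] at ha1 hb1
    have hdn0 : 0 < d n := by linarith
    have hc := (alt n).2 hdn0
    linarith
  · -- e > 0 : d n < 0 and d (n+1) < 0, contradiction
    have habs : |e| = e := abs_of_pos hpos
    rw [habs] at ha2 hb2
    have hdn0 : d n < 0 := by linarith
    have hc := (alt n).1 hdn0
    linarith
end

section
/- Assume J ⊆ (0,+∞) is a nondegenerate interval that is bounded and whose closure does not contain 0. If f : J → J is continuous on J and satisfies f^3(x) = f(x)^3 / x^2 for all x ∈ J, then f(x) = x for every x ∈ J. -/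
/-- If `J ⊆ (0, ∞)` is a bounded nondegenerate interval with `0 ∉ closure J` and
`f : J → J` is continuous and satisfies `f(f(f x)) = (f x)^3 / x^2` on `J`, then
`f = id` on `J`. -/
theorem stmt_17 (J : Set ℝ) (hJpos : J ⊆ Set.Ioi (0 : ℝ)) (hJ : J.OrdConnected)
    (hnd : J.Nontrivial) (hbdd : Bornology.IsBounded J) (h0 : (0 : ℝ) ∉ closure J)
    (f : ℝ → ℝ) (hmap : Set.MapsTo f J J) (hcont : ContinuousOn f J)
    (heq : ∀ x ∈ J, f (f (f x)) = (f x) ^ 3 / x ^ 2) :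
    ∀ x ∈ J, f x = x := by
  intro x hx
  -- lower and upper bounds for J
  obtain ⟨M, hM⟩ := hbdd.exists_norm_le
  have hεex : ∃ ε > 0, ∀ y ∈ J, ε ≤ y := by
    rw [Metric.mem_closure_iff] at h0
    push_neg at h0
    obtain ⟨ε, hε, h⟩ := h0
    refine ⟨ε, hε, fun y hy => ?_⟩
    have h1 := h y hy
    have hy0 := hJpos hy
    rw [Real.dist_eq, abs_of_nonpos (by simp at hy0 ⊢; linarith)] at h1
    linarith
  obtain ⟨ε, hε0, hεle⟩ := hεex
  set X : ℕ → ℝ := fun n => f^[n] x with hX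
  have hXJ : ∀ n, X n ∈ J := fun n => hmap.iterate n hx
  have hXpos : ∀ n, 0 < X n := fun n => hJpos (hXJ n)
  have hstep : ∀ n, X (n + 1) = f (X n) := fun n => Function.iterate_succ_apply' f n x
  have hrec : ∀ n, X (n + 3) = (X (n + 1)) ^ 3 / (X n) ^ 2 := by
    intro n
    have h3 : X (n + 3) = f (X (n + 2)) := hstep (n + 2)
    rw [h3, hstep (n + 1), hstep n]
    exact heq _ (hXJ n)
  set u : ℕ → ℝ := fun n => Real.log (X n) with hu
  have hurec : ∀ n, u (n + 3) = 3 * u (n + 1) - 2 * u n := by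
    intro n
    have h1 := hrec n
    have p0 := hXpos n
    have p1 := hXpos (n + 1)
    simp only [hu]
    rw [h1, Real.log_div (by positivity) (by positivity), Real.log_pow, Real.log_pow]
    push_cast; ring
  have hubd : ∀ n, Real.log ε ≤ u n ∧ u n ≤ Real.log M := by
    intro n
    constructor
    · exact Real.log_le_log hε0 (hεle _ (hXJ n))
    · refine Real.log_le_log (hXpos n) ?_
      have := hM _ (hXJ n)
      rw [Real.norm_eq_abs, abs_of_pos (hXpos n)] at this
      exact this
  set a : ℕ → ℝ := fun n => u (n + 1) - u n with ha
  have harec : ∀ n, a (n + 2) = 2 * a n - a (n + 1) := by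
    intro n
    have h1 := hurec n
    simp only [ha]
    have e1 : n + 2 + 1 = n + 3 := by ring
    rw [e1]
    linarith
  set A : ℝ := (2 * a 0 + a 1) / 3 with hA
  set B : ℝ := (a 0 - a 1) / 3 with hB
  have hform : ∀ n, a n = A + B * (-2) ^ n := by
    have key : ∀ n, a n = A + B * (-2) ^ n ∧ a (n + 1) = A + B * (-2) ^ (n + 1) := by
      intro n
      induction n with
      | zero => constructor <;> simp [hA, hB] <;> ring
      | succ k ih =>
        refine ⟨ih.2, ?_⟩
        have h1 := harec k
        rw [ih.1, ih.2] at h1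
        rw [h1]; ring
    exact fun n => (key n).1
  set C : ℝ := Real.log M - Real.log ε with hC
  have habd : ∀ n, |a n| ≤ C := by
    intro n
    have h1 := hubd n
    have h2 := hubd (n + 1)
    rw [abs_le]
    constructor <;> simp only [ha, hC] <;> linarith [h1.1, h1.2, h2.1, h2.2]
  have hB0 : B = 0 := by
    by_contra hBne
    obtain ⟨n, hn⟩ := pow_unbounded_of_one_lt ((C + |A|) / |B|) (by norm_num : (1 : ℝ) < 4)
    have hBpos : 0 < |B| := abs_pos.mpr hBne
    have h4 : C + |A| < |B| * 4 ^ n := by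
      rw [div_lt_iff₀ hBpos] at hn; linarith [hn]
    have hbd := habd (2 * n)
    rw [hform (2 * n)] at hbd
    have hpow : (-2 : ℝ) ^ (2 * n) = 4 ^ n := by
      rw [pow_mul]; norm_num
    rw [hpow] at hbd
    have h5 : |B * 4 ^ n| ≤ |A + B * 4 ^ n| + |A| := by
      calc |B * 4 ^ n| = |(A + B * 4 ^ n) + (-A)| := by ring_nf
        _ ≤ |A + B * 4 ^ n| + |(-A)| := abs_add_le _ _
        _ = |A + B * 4 ^ n| + |A| := by rw [abs_neg]
    rw [abs_mul, abs_of_pos (by positivity : (0:ℝ) < (4:ℝ) ^ n)] at h5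
    linarith
  have haA : ∀ n, a n = A := by
    intro n; rw [hform n, hB0]; ring
  have hun : ∀ n, u n = u 0 + n * A := by
    intro n
    induction n with
    | zero => simp
    | succ k ih =>
      have := haA k
      simp only [ha] at this
      push_cast
      linarith
  have hA0 : A = 0 := by
    by_contra hAne
    obtain ⟨n, hn⟩ := exists_nat_gt ((C + C) / |A|)
    have hApos : 0 < |A| := abs_pos.mpr hAne
    have h1 := hubd n
    have h2 := hubd 0
    have h3 := hun n
    have h4 : |(n : ℝ) * A| ≤ C + C := by
      rw [abs_le]
      constructor <;> simp only [hC] <;> nlinarith [h1.1, h1.2, h2.1, h2.2]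
    rw [abs_mul, Nat.abs_cast] at h4
    rw [div_lt_iff₀ hApos] at hn
    nlinarith
  have ha0 : a 0 = 0 := by
    have := haA 0; rw [hA0] at this; exact this
  have hu10 : u 1 = u 0 := by
    simp only [ha] at ha0; linarith
  have hX1 : X 1 = f x := by simp [hX]
  have hX0 : X 0 = x := by simp [hX]
  have hfx : Real.log (f x) = Real.log x := by
    have := hu10
    simp only [hu, hX1, hX0] at this
    exact this
  have hfxpos : 0 < f x := by rw [← hX1]; exact hXpos 1
  have hxpos : 0 < x := hJpos hx
  calc f x = Real.exp (Real.log (f x)) := (Real.exp_log hfxpos).symm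
    _ = Real.exp (Real.log x) := by rw [hfx]
    _ = x := Real.exp_log hxpos
end

section
/- Assume J ⊆ (0,+∞) is a nondegenerate interval such that either (a) J is bounded and 0 belongs to the closure of J, or (b) J is unbounded and 0 does not belong to the closure of J. If f : J → J is continuous on J and satisfies f^3(x) = f(x)^3 / x^2 for all x ∈ J, then there exists c > 0 with f(x) = c*x for every x ∈ J; moreover c ≤ 1 in case (a) and c ≥ 1 in case (b). -/
lemma stmt18_pow4 (m : ℕ) : ((m:ℝ))^2 ≤ 4^m := by
  have h : (m:ℝ) ≤ 2^m := by exact_mod_cast (Nat.lt_two_pow_self (n := m)).le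
  calc ((m:ℝ))^2 ≤ ((2:ℝ)^m)^2 := by
        apply pow_le_pow_left₀ (Nat.cast_nonneg m) h _
    _ = 4^m := by rw [← pow_mul, mul_comm, pow_mul]; norm_num

lemma stmt18_helper (a b c M : ℝ) (hc : 0 < c) : ∃ m : ℕ, M < a + b*m + c*4^m := by
  obtain ⟨m, hm⟩ := exists_nat_gt (max ((1-b)/c) (M - a))
  refine ⟨m, ?_⟩
  have h1 : (1-b)/c < m := lt_of_le_of_lt (le_max_left _ _) hm
  have h2 : M - a < m := lt_of_le_of_lt (le_max_right _ _) hm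
  have h3 : 1 - b < m * c := (div_lt_iff₀ hc).mp h1
  have h4 : (m:ℝ)^2 ≤ 4^m := stmt18_pow4 m
  have h5 : c*(m:ℝ)^2 ≤ c*4^m := by nlinarith
  have h6 : (0:ℝ) ≤ m := Nat.cast_nonneg m
  have h7 : (0:ℝ) ≤ (m:ℝ) * (b + c*m - 1) := mul_nonneg h6 (by nlinarith)
  nlinarith

lemma stmt18_key (J : Set ℝ) (hJpos : J ⊆ Set.Ioi (0:ℝ)) (f : ℝ → ℝ) (hmap : Set.MapsTo f J J)
    (heq : ∀ x ∈ J, f (f (f x)) = (f x) ^ 3 / x ^ 2)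
    (hb : (∃ M, ∀ y ∈ J, y ≤ M) ∨ (∃ a, 0 < a ∧ ∀ y ∈ J, a ≤ y)) :
    ∀ x ∈ J, f (f x) * x = f x ^ 2 := by
  intro x hx
  set u : ℕ → ℝ := fun n => f^[n] x with hu
  have humem : ∀ n, u n ∈ J := fun n => (hmap.iterate n) hx
  have hupos : ∀ n, 0 < u n := fun n => hJpos (humem n)
  have hunext : ∀ n, u (n+1) = f (u n) := fun n => Function.iterate_succ_apply' f n x
  have hurec : ∀ n, u (n+3) = u (n+1) ^ 3 / u n ^ 2 := by
    intro n
    have h1 : u (n+3) = f (f (f (u n))) := by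
      rw [show n+3 = (n+2)+1 by ring, hunext (n+2), show n+2 = (n+1)+1 by ring,
        hunext (n+1), hunext n]
    rw [h1, heq (u n) (humem n), ← hunext n]
  set v : ℕ → ℝ := fun n => Real.log (u n) with hv
  have hvrec : ∀ n, v (n+3) = 3 * v (n+1) - 2 * v n := by
    intro n
    have h0 : v (n+3) = Real.log (u (n+1) ^ 3 / u n ^ 2) := by rw [hv]; simp only; rw [hurec n]
    rw [h0, Real.log_div (pow_ne_zero 3 (hupos (n+1)).ne') (pow_ne_zero 2 (hupos n).ne'), Real.log_pow, Real.log_pow]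
    simp only [hv]
    push_cast; ring
  set E := v 2 - 2 * v 1 + v 0 with hE
  set A := v 0 - E/9 with hA
  set B := v 1 - v 0 + E/3 with hB
  have closed : ∀ n, v n = A + B*n + (E/9)*(-2)^n := by
    set P : ℕ → Prop := fun n => v n = A + B*n + (E/9)*(-2)^n with hP
    have key : ∀ n, P n ∧ P (n+1) ∧ P (n+2) := by
      intro n
      induction n with
      | zero =>
        refine ⟨?_, ?_, ?_⟩ <;> · simp only [hP]; rw [hA, hB, hE]; push_cast; ring
      | succ n ih =>
        refine ⟨ih.2.1, ih.2.2, ?_⟩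
        have h1 : v (n+1+2) = 3 * v (n+1) - 2 * v n := by
          rw [show n+1+2 = n+3 by ring]; exact hvrec n
        have h2 := ih.1
        have h3 := ih.2.1
        simp only [hP] at h2 h3 ⊢
        rw [h1, h2, h3]
        push_cast; ring
    exact fun n => (key n).1
  have hE0 : E = 0 := by
    by_contra hEne
    rcases hb with ⟨M, hM⟩ | ⟨a, hapos, ha⟩
    · have hvle : ∀ n, v n ≤ Real.log M := fun n => Real.log_le_log (hupos n) (hM _ (humem n))
      rcases lt_or_gt_of_ne hEne with hneg | hpos
      · obtain ⟨m, hm⟩ := stmt18_helper (A+B) (2*B) (-2*E/9) (Real.log M) (by linarith)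
        have h2 := closed (2*m+1)
        have h3 : (-2:ℝ)^(2*m+1) = -2 * 4^m := by
          rw [pow_succ, pow_mul]; norm_num [mul_comm]
        rw [h3] at h2
        have h4 := hvle (2*m+1)
        rw [h2] at h4
        push_cast at h4
        nlinarith
      · obtain ⟨m, hm⟩ := stmt18_helper A (2*B) (E/9) (Real.log M) (by linarith)
        have h2 := closed (2*m)
        have h3 : (-2:ℝ)^(2*m) = 4^m := by rw [pow_mul]; norm_num
        rw [h3] at h2
        have h4 := hvle (2*m)
        rw [h2] at h4
        push_cast at h4
        nlinarith
    · have hvge : ∀ n, Real.log a ≤ v n := fun n => Real.log_le_log hapos (ha _ (humem n))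
      rcases lt_or_gt_of_ne hEne with hneg | hpos
      · obtain ⟨m, hm⟩ := stmt18_helper (-A) (-2*B) (-E/9) (-Real.log a) (by linarith)
        have h2 := closed (2*m)
        have h3 : (-2:ℝ)^(2*m) = 4^m := by rw [pow_mul]; norm_num
        rw [h3] at h2
        have h4 := hvge (2*m)
        rw [h2] at h4
        push_cast at h4
        nlinarith
      · obtain ⟨m, hm⟩ := stmt18_helper (-(A+B)) (-2*B) (2*E/9) (-Real.log a) (by linarith)
        have h2 := closed (2*m+1)
        have h3 : (-2:ℝ)^(2*m+1) = -2 * 4^m := by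
          rw [pow_succ, pow_mul]; norm_num [mul_comm]
        rw [h3] at h2
        have h4 := hvge (2*m+1)
        rw [h2] at h4
        push_cast at h4
        nlinarith
  have hlog : Real.log (u 2 * u 0) = Real.log (u 1 ^ 2) := by
    rw [Real.log_mul (hupos 2).ne' (hupos 0).ne', Real.log_pow]
    have : v 2 - 2 * v 1 + v 0 = 0 := by rw [← hE]; exact hE0
    simp only [hv] at this ⊢
    push_cast; linarith
  have hmul : u 2 * u 0 = u 1 ^ 2 := by
    have h := congrArg Real.exp hlog
    rwa [Real.exp_log (mul_pos (hupos 2) (hupos 0)), Real.exp_log (pow_pos (hupos 1) 2)] at h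
  have h20 : u 2 = f (f x) := by
    rw [show (2:ℕ) = 1 + 1 from rfl, hu]
    simp [Function.iterate_succ_apply']
  have h10 : u 1 = f x := by rw [hu]; simp
  have h00 : u 0 = x := by rw [hu]; simp
  rw [h20, h10, h00] at hmul
  exact hmul


lemma stmt18_iter (J : Set ℝ) (hJpos : J ⊆ Set.Ioi (0:ℝ)) (f : ℝ → ℝ) (hmap : Set.MapsTo f J J)
    (hkey : ∀ x ∈ J, f (f x) * x = f x ^ 2) :
    ∀ x ∈ J, ∀ n : ℕ, f^[n] x = x * (f x / x) ^ n := by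
  intro x hx
  have hx0 : (0:ℝ) < x := hJpos hx
  have hfx0 : 0 < f x := hJpos (hmap hx)
  have key2 : ∀ n, (f^[n] x = x * (f x / x)^n) ∧ (f^[n+1] x = x * (f x / x)^(n+1)) := by
    intro n
    induction n with
    | zero =>
      refine ⟨by rw [Function.iterate_zero_apply, pow_zero, mul_one], ?_⟩
      rw [show (0+1 : ℕ) = 1 from rfl, Function.iterate_one, pow_one]
      field_simp
    | succ n ih =>
      refine ⟨ih.2, ?_⟩
      have hmem : f^[n] x ∈ J := (hmap.iterate n) hx
      have hpos : 0 < f^[n] x := hJpos hmem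
      have h2 := hkey (f^[n] x) hmem
      have h1 : f^[n+1+1] x = f (f (f^[n] x)) := by
        rw [Function.iterate_succ_apply', Function.iterate_succ_apply']
      have h3 : f (f^[n] x) = f^[n+1] x := (Function.iterate_succ_apply' f n x).symm
      rw [h3] at h2
      have h4 : f (f^[n+1] x) = (f^[n+1] x)^2 / f^[n] x :=
        ((eq_div_iff hpos.ne').mpr h2)
      rw [h1, h3, h4, ih.1, ih.2]
      have ht0 : f x / x ≠ 0 := by positivity
      field_simp
      ring
  exact fun n => (key2 n).1

lemma stmt18_inj (J : Set ℝ) (hJpos : J ⊆ Set.Ioi (0:ℝ)) (f : ℝ → ℝ) (hmap : Set.MapsTo f J J)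
    (hkey : ∀ x ∈ J, f (f x) * x = f x ^ 2) : Set.InjOn f J := by
  intro p hp q hq hpq
  have h1 := hkey p hp
  have h2 := hkey q hq
  rw [hpq] at h1
  have hffq : 0 < f (f q) := hJpos (hmap (hmap hq))
  have := h1.trans h2.symm
  exact mul_left_cancel₀ hffq.ne' this

lemma stmt18_mono (J : Set ℝ) (hJpos : J ⊆ Set.Ioi (0:ℝ)) (f : ℝ → ℝ) (hmap : Set.MapsTo f J J)
    (hkey : ∀ x ∈ J, f (f x) * x = f x ^ 2)
    (hincr : ∀ a ∈ J, ∀ b ∈ J, a < b → f a < f b) :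
    ∀ x ∈ J, ∀ y ∈ J, x ≤ y → f x / x ≤ f y / y := by
  intro x hx y hy hxy
  rcases eq_or_lt_of_le hxy with rfl | hlt
  · exact le_rfl
  by_contra h
  push_neg at h
  have hx0 : (0:ℝ) < x := hJpos hx
  have hy0 : (0:ℝ) < y := hJpos hy
  have htx : 0 < f x / x := div_pos (hJpos (hmap hx)) hx0
  have hty : 0 < f y / y := div_pos (hJpos (hmap hy)) hy0
  have hr : 1 < (f x / x) / (f y / y) := (one_lt_div hty).mpr h
  obtain ⟨n, hn⟩ := pow_unbounded_of_one_lt (y / x) hr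
  have hiterlt : ∀ m : ℕ, f^[m] x < f^[m] y := by
    intro m
    induction m with
    | zero => simpa using hlt
    | succ m ih =>
      rw [Function.iterate_succ_apply', Function.iterate_succ_apply']
      exact hincr _ ((hmap.iterate m) hx) _ ((hmap.iterate m) hy) ih
  have h1 := hiterlt n
  rw [stmt18_iter J hJpos f hmap hkey x hx n, stmt18_iter J hJpos f hmap hkey y hy n] at h1
  have hn' : y / x < (f x / x)^n / (f y / y)^n := by rw [← div_pow]; exact hn
  rw [div_lt_div_iff₀ hx0 (pow_pos hty n)] at hn'
  have h2 : y * (f y / y)^n < x * (f x / x)^n := by linarith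
  linarith


lemma stmt18_tinv (J : Set ℝ) (hJpos : J ⊆ Set.Ioi (0:ℝ)) (f : ℝ → ℝ) (hmap : Set.MapsTo f J J)
    (hkey : ∀ x ∈ J, f (f x) * x = f x ^ 2) :
    ∀ x ∈ J, ∀ n : ℕ, f (f^[n] x) / (f^[n] x) = f x / x := by
  intro x hx n
  have hx0 : 0 < x := hJpos hx
  have ht0 : 0 < f x / x := div_pos (hJpos (hmap hx)) hx0
  have h1 : f (f^[n] x) = f^[n+1] x := (Function.iterate_succ_apply' f n x).symm
  have h2 : x * (f x/x)^n ≠ 0 := by positivity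
  rw [h1, stmt18_iter J hJpos f hmap hkey x hx (n+1), stmt18_iter J hJpos f hmap hkey x hx n,
    pow_succ, show x * ((f x/x)^n * (f x/x)) = (f x/x) * (x * (f x/x)^n) by ring,
    mul_div_assoc, div_self h2, mul_one]

lemma stmt18_case_a (J : Set ℝ) (hJpos : J ⊆ Set.Ioi (0:ℝ)) (hJ : J.OrdConnected)
    (hnd : J.Nontrivial) (f : ℝ → ℝ) (hmap : Set.MapsTo f J J) (hcont : ContinuousOn f J)
    (heq : ∀ x ∈ J, f (f (f x)) = (f x) ^ 3 / x ^ 2)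
    (hbdd : Bornology.IsBounded J) (hcl : (0:ℝ) ∈ closure J) :
    ∃ c : ℝ, 0 < c ∧ c ≤ 1 ∧ ∀ x ∈ J, f x = c * x := by
  obtain ⟨x0, hx0J⟩ := hnd.nonempty
  obtain ⟨M, hM⟩ := (isBounded_iff_bddBelow_bddAbove.mp hbdd).2
  have hMle : ∀ y ∈ J, y ≤ M := fun y hy => hM hy
  have hkey := stmt18_key J hJpos f hmap heq (Or.inl ⟨M, hMle⟩)
  have hiter := stmt18_iter J hJpos f hmap hkey
  have hinj := stmt18_inj J hJpos f hmap hkey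
  have htinv := stmt18_tinv J hJpos f hmap hkey
  have ht1 : ∀ x ∈ J, f x / x ≤ 1 := by
    intro x hx
    by_contra h; push_neg at h
    have hx0 : 0 < x := hJpos hx
    obtain ⟨n, hn⟩ := pow_unbounded_of_one_lt (M / x) h
    have h1 : f^[n] x ≤ M := hMle _ ((hmap.iterate n) hx)
    rw [hiter x hx n] at h1
    rw [div_lt_iff₀ hx0] at hn
    linarith
  have hlow : ∀ z x, x ∈ J → 0 < z → z ≤ x → z ∈ J := by
    intro z x hx hz hzx
    obtain ⟨b, hbJ, hb⟩ := Metric.mem_closure_iff.mp hcl z hz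
    have hb0 : 0 < b := hJpos hbJ
    rw [Real.dist_eq, zero_sub, abs_neg, abs_of_pos hb0] at hb
    exact hJ.out hbJ hx ⟨hb.le, hzx⟩
  have hincr : ∀ a ∈ J, ∀ b ∈ J, a < b → f a < f b := by
    intro a ha b hb hab
    rcases lt_trichotomy (f a) (f b) with h | h | h
    · exact h
    · exact absurd (hinj ha hb h) (ne_of_lt hab)
    · exfalso
      set z := min a (f b) with hz
      have hfb0 : 0 < f b := hJpos (hmap hb)
      have hz0 : 0 < z := lt_min (hJpos ha) hfb0
      have hzJ : z ∈ J := hlow z a ha hz0 (min_le_left _ _)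
      have hzb : z ≤ b := le_trans (min_le_left _ _) hab.le
      have hsub : Set.Icc z b ⊆ J := hJ.out hzJ hb
      rcases ContinuousOn.strictMonoOn_of_injOn_Icc' hzb (hcont.mono hsub) (hinj.mono hsub)
        with hm | hanti
      · have := hm (show a ∈ Set.Icc z b from ⟨min_le_left _ _, hab.le⟩) ⟨hzb, le_refl b⟩ hab
        linarith
      · have hz_lt_b : z < b := lt_of_le_of_lt (min_le_left _ _) hab
        have h1 : f b < f z := hanti ⟨le_rfl, hzb⟩ ⟨hzb, le_rfl⟩ hz_lt_b
        have h2 : f z ≤ z := (div_le_one hz0).mp (ht1 z hzJ)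
        have h3 : z ≤ f b := min_le_right _ _
        linarith
  have hmono := stmt18_mono J hJpos f hmap hkey hincr
  have hsubc : ∀ x ∈ J, f x / x < 1 → ∀ z ∈ J, z ≤ x → f z / z = f x / x := by
    intro x hx htx z hz hzx
    have hx0 : 0 < x := hJpos hx
    have hz0 : 0 < z := hJpos hz
    have ht0 : 0 < f x / x := div_pos (hJpos (hmap hx)) hx0
    have hrinv : 1 < (f x / x)⁻¹ := (one_lt_inv₀ ht0).mpr htx
    obtain ⟨n, hn⟩ := pow_unbounded_of_one_lt (x / z) hrinv
    have htn : 0 < (f x / x)^n := pow_pos ht0 n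
    rw [inv_pow, inv_eq_one_div, div_lt_div_iff₀ hz0 htn] at hn
    have hwJ : f^[n] x ∈ J := (hmap.iterate n) hx
    have h6 : f^[n] x ≤ z := by rw [hiter x hx n]; linarith
    have h7 := hmono _ hwJ z hz h6
    have h8 := hmono z hz x hx hzx
    have h9 := htinv x hx n
    rw [h9] at h7
    linarith
  have htcont : ContinuousOn (fun x => f x / x) J :=
    hcont.div continuousOn_id (fun x hx => (hJpos hx).ne')
  set c := f x0 / x0 with hc
  have hc0 : 0 < c := div_pos (hJpos (hmap hx0J)) (hJpos hx0J)
  have hc1 : c ≤ 1 := ht1 x0 hx0J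
  have hconst : ∀ y ∈ J, f y / y = c := by
    intro y hy
    rcases lt_trichotomy (f y / y) c with h | h | h
    · have hylt : y < x0 := by
        by_contra hge; push_neg at hge
        exact absurd (hmono x0 hx0J y hy hge) (not_le.mpr h)
      have hsub2 : Set.Icc y x0 ⊆ J := hJ.out hy hx0J
      have hmem : (f y / y + c)/2 ∈ Set.Icc ((fun x => f x / x) y) ((fun x => f x / x) x0) :=
        ⟨by simp only; linarith, by simp only; rw [← hc]; linarith⟩
      obtain ⟨z, hzIcc, hzs⟩ := intermediate_value_Icc hylt.le (htcont.mono hsub2) hmem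
      have hzJ : z ∈ J := hsub2 hzIcc
      have hzs' : f z / z = (f y / y + c)/2 := hzs
      have hzlt : f z / z < 1 := by rw [hzs']; linarith
      have := hsubc z hzJ hzlt y hy hzIcc.1
      linarith [this, hzs']
    · exact h
    · have hylt : x0 < y := by
        by_contra hge; push_neg at hge
        exact absurd (hmono y hy x0 hx0J hge) (not_le.mpr h)
      have hty1 : f y / y ≤ 1 := ht1 y hy
      have hsub2 : Set.Icc x0 y ⊆ J := hJ.out hx0J hy
      have hmem : (c + f y / y)/2 ∈ Set.Icc ((fun x => f x / x) x0) ((fun x => f x / x) y) :=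
        ⟨by simp only; rw [← hc]; linarith, by simp only; linarith⟩
      obtain ⟨z, hzIcc, hzs⟩ := intermediate_value_Icc hylt.le (htcont.mono hsub2) hmem
      have hzJ : z ∈ J := hsub2 hzIcc
      have hzs' : f z / z = (c + f y / y)/2 := hzs
      have hzlt : f z / z < 1 := by rw [hzs']; linarith
      have := hsubc z hzJ hzlt x0 hx0J hzIcc.1
      linarith [this, hzs', hc]
  refine ⟨c, hc0, hc1, fun x hx => ?_⟩
  have h := hconst x hx
  rw [div_eq_iff (hJpos hx).ne'] at h
  rw [h, mul_comm]

lemma stmt18_case_b (J : Set ℝ) (hJpos : J ⊆ Set.Ioi (0:ℝ)) (hJ : J.OrdConnected)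
    (hnd : J.Nontrivial) (f : ℝ → ℝ) (hmap : Set.MapsTo f J J) (hcont : ContinuousOn f J)
    (heq : ∀ x ∈ J, f (f (f x)) = (f x) ^ 3 / x ^ 2)
    (hbdd : ¬Bornology.IsBounded J) (hcl : (0:ℝ) ∉ closure J) :
    ∃ c : ℝ, 0 < c ∧ 1 ≤ c ∧ ∀ x ∈ J, f x = c * x := by
  obtain ⟨x0, hx0J⟩ := hnd.nonempty
  have hJne : J.Nonempty := ⟨x0, hx0J⟩
  have hbb : BddBelow J := ⟨0, fun y hy => (hJpos hy).le⟩
  set a := sInf J with ha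
  have haJ : a ∈ closure J := csInf_mem_closure hJne hbb
  have ha0 : 0 ≤ a := le_csInf hJne fun y hy => (hJpos hy).le
  have hapos : 0 < a := ha0.lt_of_ne fun hh => hcl (hh ▸ haJ)
  have hage : ∀ y ∈ J, a ≤ y := fun y hy => csInf_le hbb hy
  have hkey := stmt18_key J hJpos f hmap heq (Or.inr ⟨a, hapos, hage⟩)
  have hiter := stmt18_iter J hJpos f hmap hkey
  have hinj := stmt18_inj J hJpos f hmap hkey
  have htinv := stmt18_tinv J hJpos f hmap hkey
  have ht1 : ∀ x ∈ J, 1 ≤ f x / x := by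
    intro x hx
    by_contra h; push_neg at h
    have hx0 : 0 < x := hJpos hx
    have ht0 : 0 < f x / x := div_pos (hJpos (hmap hx)) hx0
    have hrinv : 1 < (f x / x)⁻¹ := (one_lt_inv₀ ht0).mpr h
    obtain ⟨n, hn⟩ := pow_unbounded_of_one_lt (x / a) hrinv
    have htn : 0 < (f x / x)^n := pow_pos ht0 n
    rw [inv_pow, inv_eq_one_div, div_lt_div_iff₀ hapos htn] at hn
    have h1 : a ≤ f^[n] x := hage _ ((hmap.iterate n) hx)
    rw [hiter x hx n] at h1
    nlinarith
  have hhigh : ∀ x ∈ J, ∀ w, x ≤ w → w ∈ J := by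
    intro x hx w hw
    have hba : ¬ BddAbove J := fun h => hbdd (isBounded_iff_bddBelow_bddAbove.mpr ⟨hbb, h⟩)
    obtain ⟨y, hyJ, hy⟩ := not_bddAbove_iff.mp hba w
    exact hJ.out hx hyJ ⟨hw, hy.le⟩
  have hincr : ∀ p ∈ J, ∀ q ∈ J, p < q → f p < f q := by
    intro p hp q hq hpq
    rcases lt_trichotomy (f p) (f q) with h | h | h
    · exact h
    · exact absurd (hinj hp hq h) (ne_of_lt hpq)
    · exfalso
      set w := max q (f p) with hw
      have hwJ : w ∈ J := hhigh q hq w (le_max_left _ _)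
      have hw0 : 0 < w := hJpos hwJ
      have hqw : q ≤ w := le_max_left _ _
      have hpw : p ≤ w := le_trans hpq.le hqw
      have hsub : Set.Icc p w ⊆ J := hJ.out hp hwJ
      rcases ContinuousOn.strictMonoOn_of_injOn_Icc' hpw (hcont.mono hsub) (hinj.mono hsub)
        with hm | hanti
      · have := hm ⟨le_rfl, hpw⟩ ⟨hpq.le, hqw⟩ hpq
        linarith
      · have hp_lt_w : p < w := lt_of_lt_of_le hpq hqw
        have h1 : f w < f p := hanti ⟨le_rfl, hpw⟩ ⟨hpw, le_rfl⟩ hp_lt_w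
        have h2 : w ≤ f w := (one_le_div hw0).mp (ht1 w hwJ)
        have h3 : f p ≤ w := le_max_right _ _
        linarith
  have hmono := stmt18_mono J hJpos f hmap hkey hincr
  have hsubc : ∀ x ∈ J, 1 < f x / x → ∀ z ∈ J, x ≤ z → f z / z = f x / x := by
    intro x hx htx z hz hxz
    have hx0 : 0 < x := hJpos hx
    have hz0 : 0 < z := hJpos hz
    obtain ⟨n, hn⟩ := pow_unbounded_of_one_lt (z / x) htx
    rw [div_lt_iff₀ hx0] at hn
    have hwJ : f^[n] x ∈ J := (hmap.iterate n) hx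
    have h6 : z ≤ f^[n] x := by rw [hiter x hx n]; linarith
    have h7 := hmono z hz _ hwJ h6
    have h8 := hmono x hx z hz hxz
    have h9 := htinv x hx n
    rw [h9] at h7
    linarith
  have htcont : ContinuousOn (fun x => f x / x) J :=
    hcont.div continuousOn_id (fun x hx => (hJpos hx).ne')
  set c := f x0 / x0 with hc
  have hc0 : 0 < c := div_pos (hJpos (hmap hx0J)) (hJpos hx0J)
  have hc1 : 1 ≤ c := ht1 x0 hx0J
  have hconst : ∀ y ∈ J, f y / y = c := by
    intro y hy
    have hty1 : 1 ≤ f y / y := ht1 y hy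
    rcases lt_trichotomy (f y / y) c with h | h | h
    · have hylt : y < x0 := by
        by_contra hge; push_neg at hge
        exact absurd (hmono x0 hx0J y hy hge) (not_le.mpr h)
      have hsub2 : Set.Icc y x0 ⊆ J := hJ.out hy hx0J
      have hmem : (f y / y + c)/2 ∈ Set.Icc ((fun x => f x / x) y) ((fun x => f x / x) x0) :=
        ⟨by simp only; linarith, by simp only; rw [← hc]; linarith⟩
      obtain ⟨z, hzIcc, hzs⟩ := intermediate_value_Icc hylt.le (htcont.mono hsub2) hmem
      have hzJ : z ∈ J := hsub2 hzIcc
      have hzs' : f z / z = (f y / y + c)/2 := hzs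
      have hzgt : 1 < f z / z := by rw [hzs']; linarith
      have := hsubc z hzJ hzgt x0 hx0J hzIcc.2
      linarith [this, hzs', hc]
    · exact h
    · have hylt : x0 < y := by
        by_contra hge; push_neg at hge
        exact absurd (hmono y hy x0 hx0J hge) (not_le.mpr h)
      have hsub2 : Set.Icc x0 y ⊆ J := hJ.out hx0J hy
      have hmem : (c + f y / y)/2 ∈ Set.Icc ((fun x => f x / x) x0) ((fun x => f x / x) y) :=
        ⟨by simp only; rw [← hc]; linarith, by simp only; linarith⟩
      obtain ⟨z, hzIcc, hzs⟩ := intermediate_value_Icc hylt.le (htcont.mono hsub2) hmem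
      have hzJ : z ∈ J := hsub2 hzIcc
      have hzs' : f z / z = (c + f y / y)/2 := hzs
      have hzgt : 1 < f z / z := by rw [hzs']; linarith
      have := hsubc z hzJ hzgt y hy hzIcc.2
      linarith [this, hzs']
  refine ⟨c, hc0, hc1, fun x hx => ?_⟩
  have h := hconst x hx
  rw [div_eq_iff (hJpos hx).ne'] at h
  rw [h, mul_comm]


/-- Let `J ⊆ (0, ∞)` be a nondegenerate interval such that either (a) `J` is bounded and
`0 ∈ closure J`, or (b) `J` is unbounded and `0 ∉ closure J`. If `f : J → J` is
continuous and satisfies `f(f(f x)) = (f x)^3 / x^2` on `J`, then there is `c > 0` with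
`f(x) = c x` on `J`; moreover `c ≤ 1` in case (a) and `c ≥ 1` in case (b). -/
theorem stmt_18 (J : Set ℝ) (hJpos : J ⊆ Set.Ioi (0 : ℝ)) (hJ : J.OrdConnected)
    (hnd : J.Nontrivial)
    (hcase : (Bornology.IsBounded J ∧ (0 : ℝ) ∈ closure J) ∨
      (¬Bornology.IsBounded J ∧ (0 : ℝ) ∉ closure J))
    (f : ℝ → ℝ) (hmap : Set.MapsTo f J J) (hcont : ContinuousOn f J)
    (heq : ∀ x ∈ J, f (f (f x)) = (f x) ^ 3 / x ^ 2) :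
    ∃ c : ℝ, 0 < c ∧ (∀ x ∈ J, f x = c * x) ∧
      (Bornology.IsBounded J ∧ (0 : ℝ) ∈ closure J → c ≤ 1) ∧
      (¬Bornology.IsBounded J ∧ (0 : ℝ) ∉ closure J → 1 ≤ c) := by
  rcases hcase with ⟨hbdd, hcl⟩ | ⟨hbdd, hcl⟩
  · obtain ⟨c, hc0, hc1, hcx⟩ := stmt18_case_a J hJpos hJ hnd f hmap hcont heq hbdd hcl
    exact ⟨c, hc0, hcx, fun _ => hc1, fun h => absurd hbdd h.1⟩
  · obtain ⟨c, hc0, hc1, hcx⟩ := stmt18_case_b J hJpos hJ hnd f hmap hcont heq hbdd hcl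
    exact ⟨c, hc0, hcx, fun h => absurd h.1 hbdd, fun _ => hc1⟩
end

section
/- If f : (0,+∞) → (0,+∞) is continuous and satisfies f^3(x) = f(x)^3 / x^2 for all x > 0, then there exists c ∈ (0,+∞) such that either f(x) = c*x for every x > 0, or f(x) = c / x^2 for every x > 0. -/
private noncomputable def Af (F : ℝ → ℝ) (t : ℝ) : ℝ := t - (t - 2 * F t + F (F t)) / 9
private noncomputable def Bf (F : ℝ → ℝ) (t : ℝ) : ℝ := (-2 * t + F t + F (F t)) / 3
private noncomputable def Cf (F : ℝ → ℝ) (t : ℝ) : ℝ := (t - 2 * F t + F (F t)) / 9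

private lemma iter_formula (F : ℝ → ℝ) (hFeq : ∀ t, F (F (F t)) = 3 * F t - 2 * t)
    (t : ℝ) : ∀ n : ℕ, F^[n] t = Af F t + Bf F t * n + Cf F t * (-2 : ℝ) ^ n := by
  have key : ∀ n : ℕ,
      (F^[n] t = Af F t + Bf F t * n + Cf F t * (-2:ℝ)^n)
      ∧ (F^[n+1] t = Af F t + Bf F t * ((n:ℝ)+1) + Cf F t * (-2:ℝ)^(n+1))
      ∧ (F^[n+2] t = Af F t + Bf F t * ((n:ℝ)+2) + Cf F t * (-2:ℝ)^(n+2)) := by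
    intro n
    induction n with
    | zero =>
      refine ⟨?_, ?_, ?_⟩
      · simp only [Function.iterate_zero_apply, Nat.cast_zero, pow_zero, Af, Bf, Cf]
        ring
      · show F^[1] t = _
        rw [Function.iterate_one]
        simp only [Af, Bf, Cf]; push_cast; ring
      · show F^[2] t = _
        have h2 : F^[2] t = F (F t) := rfl
        rw [h2]; simp only [Af, Bf, Cf]; push_cast; ring
    | succ n ih =>
      obtain ⟨h0, h1, h2⟩ := ih
      refine ⟨by push_cast; push_cast at h1; linarith, by
        show F^[n+2] t = _
        push_cast; push_cast at h2; linarith, ?_⟩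
      have hrec : F^[n+3] t = 3 * F^[n+1] t - 2 * F^[n] t := by
        have h3 : F^[n+3] t = F (F (F (F^[n] t))) := by
          rw [show n + 3 = 3 + n by ring, Function.iterate_add_apply]
          rfl
        have h4 : F (F^[n] t) = F^[n+1] t := (Function.iterate_succ_apply' F n t).symm
        rw [h3, hFeq, h4]
      show F^[n+3] t = _
      rw [hrec, h0, h1]
      push_cast
      ring
  exact fun n => (key n).1

private lemma orbit_le (G : ℝ → ℝ) (hG : StrictMono G) (p : ℝ) (h : p ≤ G p) :
    ∀ k, G^[k] p ≤ G^[k+1] p := by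
  intro k
  induction k with
  | zero => simpa using h
  | succ k ih =>
    have h := hG.monotone ih
    rwa [← Function.iterate_succ_apply' G k, ← Function.iterate_succ_apply' G (k+1)] at h

private lemma orbit_ge (G : ℝ → ℝ) (hG : StrictMono G) (p : ℝ) (h : G p ≤ p) :
    ∀ k, G^[k+1] p ≤ G^[k] p := by
  intro k
  induction k with
  | zero => simpa using h
  | succ k ih =>
    have h := hG.monotone ih
    rwa [← Function.iterate_succ_apply' G k, ← Function.iterate_succ_apply' G (k+1)] at h

private lemma C_eq_zero (F : ℝ → ℝ) (hmono : StrictMono F)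
    (hFeq : ∀ t, F (F (F t)) = 3 * F t - 2 * t) (t : ℝ) : Cf F t = 0 := by
  by_contra hC
  set B := Bf F t with hB
  set C := Cf F t with hCdef
  have hCpos : 0 < |C| := abs_pos.mpr hC
  obtain ⟨j, hj⟩ := pow_unbounded_of_one_lt (|B| / (3 * |C|)) (by norm_num : (1:ℝ) < 4)
  have hj' : |B| < 3 * |C| * 4 ^ j := by
    rw [div_lt_iff₀ (by positivity)] at hj
    nlinarith [pow_pos (by norm_num : (0:ℝ) < 4) j]
  have h4 : (0:ℝ) < 4 ^ j := by positivity
  have hd : ∀ k : ℕ, F^[k+1] t - F^[k] t = B - 3 * C * (-2:ℝ)^k := by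
    intro k
    rw [iter_formula F hFeq t (k+1), iter_formula F hFeq t k]
    push_cast; ring
  have hpe : (-2:ℝ)^(2*j) = 4^j := by rw [pow_mul]; norm_num
  have hpo : (-2:ℝ)^(2*j+1) = -2 * 4^j := by rw [pow_succ, hpe]; ring
  have he : F^[2*j+1] t - F^[2*j] t = B - 3 * C * 4^j := by rw [hd, hpe]
  have ho : F^[2*j+2] t - F^[2*j+1] t = B + 6 * C * 4^j := by
    have := hd (2*j+1); rw [hpo] at this; rw [this]; ring
  have hB1 : B ≤ |B| := le_abs_self B
  have hB2 : -|B| ≤ B := neg_abs_le B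
  rcases le_or_gt t (F t) with hle | hlt
  · have hall := orbit_le F hmono t hle
    have h1 := hall (2*j)
    have h2 := hall (2*j+1)
    rcases lt_or_gt_of_ne hC with hCneg | hCpos'
    · -- C < 0 : odd diff negative
      have hCabs : |C| = -C := abs_of_neg hCneg
      rw [hCabs] at hj'
      have : F^[2*j+2] t - F^[2*j+1] t < 0 := by rw [ho]; nlinarith
      have h2' : (0:ℝ) ≤ F^[2*j+1+1] t - F^[2*j+1] t := by linarith [h2]
      rw [show 2*j+1+1 = 2*j+2 from rfl] at h2'
      linarith
    · have hCabs : |C| = C := abs_of_pos hCpos'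
      rw [hCabs] at hj'
      have : F^[2*j+1] t - F^[2*j] t < 0 := by rw [he]; nlinarith
      linarith [h1]
  · have hall := orbit_ge F hmono t hlt.le
    have h1 := hall (2*j)
    have h2 := hall (2*j+1)
    rcases lt_or_gt_of_ne hC with hCneg | hCpos'
    · have hCabs : |C| = -C := abs_of_neg hCneg
      rw [hCabs] at hj'
      have : 0 < F^[2*j+1] t - F^[2*j] t := by rw [he]; nlinarith
      linarith [h1]
    · have hCabs : |C| = C := abs_of_pos hCpos'
      rw [hCabs] at hj'
      have : 0 < F^[2*j+2] t - F^[2*j+1] t := by rw [ho]; nlinarith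
      have h2' : F^[2*j+1+1] t - F^[2*j+1] t ≤ 0 := by linarith [h2]
      rw [show 2*j+1+1 = 2*j+2 from rfl] at h2'
      linarith

private lemma incr_case (F : ℝ → ℝ) (hcont : Continuous F) (hmono : StrictMono F)
    (hFeq : ∀ t, F (F (F t)) = 3 * F t - 2 * t) :
    ∃ b : ℝ, ∀ t, F t = t + b := by
  have hK : ∀ t, F (F t) = 2 * F t - t := by
    intro t
    have := C_eq_zero F hmono hFeq t
    simp only [Cf] at this
    linarith
  obtain ⟨B, hBdef⟩ : ∃ B : ℝ → ℝ, B = fun t => F t - t := ⟨_, rfl⟩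
  have hBcont : Continuous B := by rw [hBdef]; exact hcont.sub continuous_id
  have hBinv : ∀ t, B (F t) = B t := by
    intro t; simp only [hBdef]; rw [hK]; ring
  have hBiter : ∀ (t : ℝ) (n : ℕ), B (F^[n] t) = B t := by
    intro t n
    induction n with
    | zero => simp
    | succ n ih => rw [Function.iterate_succ_apply' F n t, hBinv, ih]
  have hiter : ∀ (t : ℝ) (n : ℕ), F^[n] t = t + n * B t := by
    intro t n
    induction n with
    | zero => simp
    | succ n ih =>
      rw [Function.iterate_succ_apply' F n t]
      have : F (F^[n] t) = F^[n] t + B (F^[n] t) := by simp only [hBdef]; ring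
      rw [this, hBiter, ih]
      push_cast; ring
  have hBmono : Monotone B := by
    intro u v huv
    rcases eq_or_lt_of_le huv with rfl | huv'
    · exact le_rfl
    · by_contra hlt
      push_neg at hlt
      obtain ⟨n, hn⟩ := exists_nat_gt ((v - u) / (B u - B v))
      have hpos : 0 < B u - B v := by linarith
      rw [div_lt_iff₀ hpos] at hn
      have := (hmono.iterate n) huv'
      rw [hiter, hiter] at this
      nlinarith
  have L_up : ∀ t v, 0 < B t → t ≤ v → B v = B t := by
    intro t v h0 htv
    obtain ⟨n, hn⟩ := exists_nat_gt ((v - t) / B t)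
    rw [div_lt_iff₀ h0] at hn
    have h1 : B t ≤ B v := hBmono htv
    have h2 : B v ≤ B (F^[n] t) := hBmono (by rw [hiter]; nlinarith)
    rw [hBiter] at h2
    linarith
  have L_down : ∀ t v, B t < 0 → v ≤ t → B v = B t := by
    intro t v h0 htv
    obtain ⟨n, hn⟩ := exists_nat_gt ((t - v) / (-B t))
    rw [div_lt_iff₀ (by linarith)] at hn
    have h1 : B v ≤ B t := hBmono htv
    have h2 : B (F^[n] t) ≤ B v := hBmono (by rw [hiter]; nlinarith)
    rw [hBiter] at h2
    linarith
  have hconst : ∀ u v, u ≤ v → B u = B v := by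
    intro u v huv
    rcases lt_trichotomy (B u) 0 with h | h | h
    · rcases le_or_gt 0 (B v) with h2 | h2
      · exfalso
        have hmem : B u / 2 ∈ Set.Icc (B u) (B v) := ⟨by linarith, by linarith⟩
        obtain ⟨m, hm, hBm⟩ := intermediate_value_Icc huv hBcont.continuousOn hmem
        have := L_down m u (by rw [hBm]; linarith) hm.1
        rw [hBm] at this
        linarith
      · exact L_down v u h2 huv
    · rcases lt_trichotomy (B v) 0 with h2 | h2 | h2
      · linarith [hBmono huv]
      · rw [h, h2]
      · exfalso
        have hmem : B v / 2 ∈ Set.Icc (B u) (B v) := ⟨by linarith, by linarith⟩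
        obtain ⟨m, hm, hBm⟩ := intermediate_value_Icc huv hBcont.continuousOn hmem
        have := L_up m v (by rw [hBm]; linarith) hm.2
        rw [hBm] at this
        linarith
    · exact (L_up u v h huv).symm
  refine ⟨B 0, fun t => ?_⟩
  have hBt : B t = B 0 := by
    rcases le_total t 0 with h | h
    · exact hconst t 0 h
    · exact (hconst 0 t h).symm
  have h2 : F t - t = B 0 := by rw [← hBt, hBdef]
  linarith
private lemma decr_B_zero (F : ℝ → ℝ) (hanti : StrictAnti F)
    (hsurj : Function.Surjective F)
    (hFeq : ∀ t, F (F (F t)) = 3 * F t - 2 * t) (t : ℝ) : Bf F t = 0 := by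
  have hG : StrictMono (F ∘ F) := hanti.comp hanti
  have hG2 : ∀ (x : ℝ) (k : ℕ), (F ∘ F)^[k] x = F^[2*k] x := by
    intro x k
    rw [Function.iterate_mul]
    rfl
  rcases eq_or_ne (Cf F t) 0 with hC | hC
  · -- C = 0 case : steps are constant B, incompatible with StrictAnti unless B = 0
    have h0 : F t - t = Bf F t := by
      have e1 := iter_formula F hFeq t 1
      have e0 := iter_formula F hFeq t 0
      rw [Function.iterate_one] at e1
      rw [Function.iterate_zero_apply] at e0
      rw [hC] at e1 e0
      push_cast at e1 e0
      linarith
    have h1 : F (F t) - F t = Bf F t := by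
      have e2 := iter_formula F hFeq t 2
      have e1 := iter_formula F hFeq t 1
      have h2 : F^[2] t = F (F t) := rfl
      rw [h2] at e2
      rw [Function.iterate_one] at e1
      rw [hC] at e1 e2
      push_cast at e1 e2
      linarith
    by_contra hB
    rcases lt_or_gt_of_ne hB with h | h
    · have hlt : F t < t := by linarith
      have := hanti hlt
      linarith
    · have hlt : t < F t := by linarith
      have := hanti hlt
      linarith
  · -- C ≠ 0
    by_contra hB
    have hCabs : 0 < |Cf F t| := abs_pos.mpr hC
    have hBabs : 0 < |2 * Bf F t| := by
      rw [abs_pos]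
      intro h
      exact hB (by linarith)
    -- key bound for every m
    have habs : ∀ m : ℕ, |2 * Bf F t| * 4 ^ m ≤ 6 * |Cf F t| := by
      intro m
      obtain ⟨s, hs⟩ := (hsurj.iterate (2*m)) t
      have hp0 : (-2:ℝ)^(2*m) = 4^m := by rw [pow_mul]; norm_num
      have hp1 : (-2:ℝ)^(2*m+1) = -2 * 4^m := by rw [pow_succ, hp0]; ring
      have hp2 : (-2:ℝ)^(2*m+2) = 4 * 4^m := by rw [pow_succ, hp1]; ring
      have e0 : t = Af F s + Bf F s * (2*m : ℕ) + Cf F s * (-2:ℝ)^(2*m) := by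
        rw [← hs, iter_formula F hFeq]
      have e1 : F t = Af F s + Bf F s * ((2*m+1 : ℕ) : ℝ) + Cf F s * (-2:ℝ)^(2*m+1) := by
        rw [← hs, ← Function.iterate_succ_apply' F (2*m) s]
        exact iter_formula F hFeq s (2*m+1)
      have e2 : F (F t) = Af F s + Bf F s * ((2*m+2 : ℕ) : ℝ) + Cf F s * (-2:ℝ)^(2*m+2) := by
        rw [← hs, ← Function.iterate_succ_apply' F (2*m) s,
          ← Function.iterate_succ_apply' F (2*m+1) s]
        exact iter_formula F hFeq s (2*m+2)
      have hBst : Bf F t = Bf F s := by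
        have : Bf F t = (-2 * t + F t + F (F t)) / 3 := rfl
        rw [this, e2, e1, e0, hp0, hp1, hp2]
        simp only [Bf]
        push_cast; ring
      have hCst : Cf F t = 4^m * Cf F s := by
        have : Cf F t = (t - 2 * F t + F (F t)) / 9 := rfl
        rw [this, e2, e1, e0, hp0, hp1, hp2]
        simp only [Cf]
        push_cast; ring
      -- orbit diffs for s
      have hek : ∀ k : ℕ, F^[2*k+2] s - F^[2*k] s = 2 * Bf F s + 3 * Cf F s * 4^k := by
        intro k
        have hq0 : (-2:ℝ)^(2*k) = 4^k := by rw [pow_mul]; norm_num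
        have hq2 : (-2:ℝ)^(2*k+2) = 4 * 4^k := by
          rw [pow_succ, pow_succ, hq0]; ring
        rw [iter_formula F hFeq s (2*k+2), iter_formula F hFeq s (2*k), hq0, hq2]
        push_cast; ring
      have hok : ∀ k : ℕ, F^[2*k+3] s - F^[2*k+1] s = 2 * Bf F s - 6 * Cf F s * 4^k := by
        intro k
        have hq0 : (-2:ℝ)^(2*k) = 4^k := by rw [pow_mul]; norm_num
        have hq1 : (-2:ℝ)^(2*k+1) = -2 * 4^k := by rw [pow_succ, hq0]; ring
        have hq3 : (-2:ℝ)^(2*k+3) = -8 * 4^k := by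
          rw [pow_succ, pow_succ, hq1]; ring
        rw [iter_formula F hFeq s (2*k+3), iter_formula F hFeq s (2*k+1), hq1, hq3]
        push_cast; ring
      -- even orbit : G^[k] s = F^[2k] s ; odd orbit : G^[k] (F s) = F^[2k+1] s
      have hodd : ∀ k : ℕ, (F ∘ F)^[k] (F s) = F^[2*k+1] s := by
        intro k
        rw [hG2, ← Function.iterate_succ_apply F (2*k) s]
      have hCs : Cf F s ≠ 0 := by
        intro h
        rw [h, mul_zero] at hCst
        exact hC hCst
      have hE : 0 ≤ 2 * Bf F s + 3 * Cf F s ∨ 2 * Bf F s + 3 * Cf F s ≤ 0 := le_total _ _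
      -- case on sign of Cf F s
      rcases lt_or_gt_of_ne hCs with hCneg | hCpos
      · -- Cs < 0 : show 2B + 3Cs ≤ 0 and 0 ≤ 2B - 6Cs
        have h1 : 2 * Bf F s + 3 * Cf F s ≤ 0 := by
          by_contra hcon
          push_neg at hcon
          have hst : s ≤ (F ∘ F) s := by
            have := hek 0
            simp only [mul_zero, Function.iterate_zero_apply, pow_zero] at this
            have h2 : F^[2] s = (F ∘ F) s := rfl
            rw [h2] at this
            linarith
          have hall := orbit_le (F ∘ F) hG s hst
          obtain ⟨k, hk⟩ := pow_unbounded_of_one_lt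
            ((2 * Bf F s) / (-3 * Cf F s)) (by norm_num : (1:ℝ) < 4)
          rw [div_lt_iff₀ (by linarith)] at hk
          have hdk := hek k
          have hkk := hall k
          rw [hG2, hG2] at hkk
          have hx1 : F^[2*(k+1)] s = F^[2*k+2] s := by norm_num [Nat.mul_succ]
          rw [hx1] at hkk
          nlinarith
        have h2 : 0 ≤ 2 * Bf F s - 6 * Cf F s := by
          by_contra hcon
          push_neg at hcon
          have hst : (F ∘ F) (F s) ≤ F s := by
            have := hok 0
            simp only [mul_zero, pow_zero] at this
            have ha : F^[1] s = F s := rfl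
            have hb : F^[3] s = (F ∘ F) (F s) := rfl
            rw [ha, hb] at this
            linarith
          have hall := orbit_ge (F ∘ F) hG (F s) hst
          obtain ⟨k, hk⟩ := pow_unbounded_of_one_lt
            ((-2 * Bf F s) / (-6 * Cf F s)) (by norm_num : (1:ℝ) < 4)
          rw [div_lt_iff₀ (by linarith)] at hk
          have hdk := hok k
          have hkk := hall k
          rw [hodd, hodd] at hkk
          have hx1 : 2*(k+1)+1 = 2*k+3 := by ring
          rw [hx1] at hkk
          nlinarith
        -- conclude |2B| ≤ -6 Cs, and Cf t = 4^m Cs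
        rw [hBst, hCst, abs_mul ((4:ℝ)^m) (Cf F s), abs_of_pos (by positivity : (0:ℝ) < (4:ℝ)^m)]
        have habs2 : |2 * Bf F s| ≤ 6 * |Cf F s| := by
          rw [abs_of_neg hCneg, abs_le]
          constructor <;> linarith
        have h4 : (0:ℝ) < (4:ℝ)^m := by positivity
        have := mul_le_mul_of_nonneg_right habs2 h4.le
        linarith
      · -- Cs > 0 : show 0 ≤ 2B + 3Cs and 2B - 6Cs ≤ 0
        have h1 : 0 ≤ 2 * Bf F s + 3 * Cf F s := by
          by_contra hcon
          push_neg at hcon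
          have hst : (F ∘ F) s ≤ s := by
            have := hek 0
            simp only [mul_zero, Function.iterate_zero_apply, pow_zero] at this
            have h2 : F^[2] s = (F ∘ F) s := rfl
            rw [h2] at this
            linarith
          have hall := orbit_ge (F ∘ F) hG s hst
          obtain ⟨k, hk⟩ := pow_unbounded_of_one_lt
            ((-2 * Bf F s) / (3 * Cf F s)) (by norm_num : (1:ℝ) < 4)
          rw [div_lt_iff₀ (by linarith)] at hk
          have hdk := hek k
          have hkk := hall k
          rw [hG2, hG2] at hkk
          have hx1 : F^[2*(k+1)] s = F^[2*k+2] s := by norm_num [Nat.mul_succ]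
          rw [hx1] at hkk
          nlinarith
        have h2 : 2 * Bf F s - 6 * Cf F s ≤ 0 := by
          by_contra hcon
          push_neg at hcon
          have hst : F s ≤ (F ∘ F) (F s) := by
            have := hok 0
            simp only [mul_zero, pow_zero] at this
            have ha : F^[1] s = F s := rfl
            have hb : F^[3] s = (F ∘ F) (F s) := rfl
            rw [ha, hb] at this
            linarith
          have hall := orbit_le (F ∘ F) hG (F s) hst
          obtain ⟨k, hk⟩ := pow_unbounded_of_one_lt
            ((2 * Bf F s) / (6 * Cf F s)) (by norm_num : (1:ℝ) < 4)
          rw [div_lt_iff₀ (by linarith)] at hk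
          have hdk := hok k
          have hkk := hall k
          rw [hodd, hodd] at hkk
          have hx1 : 2*(k+1)+1 = 2*k+3 := by ring
          rw [hx1] at hkk
          nlinarith
        rw [hBst, hCst, abs_mul ((4:ℝ)^m) (Cf F s), abs_of_pos (by positivity : (0:ℝ) < (4:ℝ)^m)]
        have habs2 : |2 * Bf F s| ≤ 6 * |Cf F s| := by
          rw [abs_of_pos hCpos, abs_le]
          constructor <;> linarith
        have h4 : (0:ℝ) < (4:ℝ)^m := by positivity
        have := mul_le_mul_of_nonneg_right habs2 h4.le
        linarith
    -- Archimedean contradiction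
    obtain ⟨m, hm⟩ := pow_unbounded_of_one_lt
      (6 * |Cf F t| / |2 * Bf F t|) (by norm_num : (1:ℝ) < 4)
    rw [div_lt_iff₀ hBabs] at hm
    have := habs m
    nlinarith


private lemma decr_case (F : ℝ → ℝ) (hcont : Continuous F) (hanti : StrictAnti F)
    (hFeq : ∀ t, F (F (F t)) = 3 * F t - 2 * t) :
    ∃ c : ℝ, ∀ t, F t = c - 2 * t := by
  have hlow : ∀ y : ℝ, ∃ s, F s ≤ y := by
    intro y
    refine ⟨F (F (max 0 ((3 * F 0 - y)/2))), ?_⟩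
    have h1 : F (max 0 ((3 * F 0 - y)/2)) ≤ F 0 := hanti.antitone (le_max_left _ _)
    have h2 : (3 * F 0 - y)/2 ≤ max 0 ((3 * F 0 - y)/2) := le_max_right _ _
    rw [hFeq]
    linarith
  have hhigh : ∀ y : ℝ, ∃ s, y ≤ F s := by
    intro y
    refine ⟨F (F (min 0 ((3 * F 0 - y)/2))), ?_⟩
    have h1 : F 0 ≤ F (min 0 ((3 * F 0 - y)/2)) := hanti.antitone (min_le_left _ _)
    have h2 : min 0 ((3 * F 0 - y)/2) ≤ (3 * F 0 - y)/2 := min_le_right _ _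
    rw [hFeq]
    linarith
  have hsurj : Function.Surjective F := by
    intro y
    obtain ⟨a, ha⟩ := hlow y
    obtain ⟨b, hb⟩ := hhigh y
    exact intermediate_value_univ a b hcont ⟨ha, hb⟩
  have hK : ∀ t, F (F t) = 2 * t - F t := by
    intro t
    have := decr_B_zero F hanti hsurj hFeq t
    simp only [Bf] at this
    linarith
  obtain ⟨A, hAdef⟩ : ∃ A : ℝ → ℝ, A = fun t => (F t + 2 * t) / 3 := ⟨_, rfl⟩
  obtain ⟨C2, hC2def⟩ : ∃ C2 : ℝ → ℝ, C2 = fun t => (t - F t) / 3 := ⟨_, rfl⟩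
  have hid : ∀ t, A t + C2 t = t := by
    intro t; rw [hAdef, hC2def]; ring
  have hAF : ∀ t, A (F t) = A t := by
    intro t; rw [hAdef]
    show (F (F t) + 2 * F t) / 3 = (F t + 2 * t) / 3
    rw [hK]; ring
  have hAiter : ∀ (t : ℝ) (n : ℕ), A (F^[n] t) = A t := by
    intro t n
    induction n with
    | zero => simp
    | succ n ih => rw [Function.iterate_succ_apply' F n t, hAF, ih]
  have hCG : ∀ t, C2 (F (F t)) = 4 * C2 t := by
    intro t
    rw [hC2def]
    show (F (F t) - F (F (F t))) / 3 = 4 * ((t - F t) / 3)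
    rw [hFeq, hK]
    ring
  have hCiter : ∀ (t : ℝ) (k : ℕ), C2 (F^[2*k] t) = 4^k * C2 t := by
    intro t k
    induction k with
    | zero => simp
    | succ k ih =>
      have h1 : F^[2*(k+1)] t = F (F (F^[2*k] t)) := by
        rw [show 2*(k+1) = 2 + 2*k by ring, Function.iterate_add_apply]
        rfl
      rw [h1, hCG, ih, pow_succ]
      ring
  have hG : StrictMono (F ∘ F) := hanti.comp hanti
  have hG2 : ∀ (x : ℝ) (k : ℕ), (F ∘ F)^[k] x = F^[2*k] x := by
    intro x k
    rw [Function.iterate_mul]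
    rfl
  have hAmono : Monotone A := by
    intro u v huv
    rcases eq_or_lt_of_le huv with rfl | huv'
    · exact le_rfl
    · by_contra hlt
      push_neg at hlt
      obtain ⟨m, hm⟩ := pow_unbounded_of_one_lt
        ((|C2 u| + |C2 v|) / (A u - A v)) (by norm_num : (1:ℝ) < 4)
      rw [div_lt_iff₀ (by linarith)] at hm
      obtain ⟨w, hw⟩ := (hsurj.iterate (2*m)) u
      obtain ⟨z, hz⟩ := (hsurj.iterate (2*m)) v
      have hGiter : StrictMono ((F ∘ F)^[m]) := hG.iterate m
      have hwz : w < z := hGiter.lt_iff_lt.mp (by rw [hG2, hw, hG2, hz]; exact huv')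
      have hAw : A w = A u := by rw [← hw, hAiter]
      have hAz : A z = A v := by rw [← hz, hAiter]
      have hCw : C2 u = 4^m * C2 w := by rw [← hw]; exact hCiter w m
      have hCz : C2 v = 4^m * C2 z := by rw [← hz]; exact hCiter z m
      have h4 : (0:ℝ) < (4:ℝ)^m := by positivity
      have hsm : |C2 w| + |C2 z| < A u - A v := by
        rw [hCw, hCz, abs_mul ((4:ℝ)^m) (C2 w), abs_mul ((4:ℝ)^m) (C2 z),
          abs_of_pos h4] at hm
        nlinarith
      have hw' : A u + C2 w = w := by rw [← hAw]; exact hid w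
      have hz' : A v + C2 z = z := by rw [← hAz]; exact hid z
      have l1 : C2 z ≤ |C2 z| := le_abs_self _
      have l2 : -|C2 w| ≤ C2 w := neg_abs_le _
      linarith
  have hAconst : ∀ s t', A s = A t' := by
    intro s t'
    obtain ⟨r, hr⟩ := hhigh (max s t')
    have hFu : max s t' ≤ F (min r (min s t')) :=
      le_trans hr (hanti.antitone (min_le_left _ _))
    have hus : min r (min s t') ≤ s := le_trans (min_le_right _ _) (min_le_left _ _)
    have hut : min r (min s t') ≤ t' := le_trans (min_le_right _ _) (min_le_right _ _)
    have h1 : A s ≤ A (F (min r (min s t'))) := hAmono (le_trans (le_max_left _ _) hFu)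
    have h2 : A t' ≤ A (F (min r (min s t'))) := hAmono (le_trans (le_max_right _ _) hFu)
    rw [hAF] at h1 h2
    have h3 : A (min r (min s t')) ≤ A s := hAmono hus
    have h4 : A (min r (min s t')) ≤ A t' := hAmono hut
    linarith
  refine ⟨3 * A 0, fun t => ?_⟩
  have hFt : F t = 3 * A t - 2 * t := by rw [hAdef]; ring
  rw [hFt, hAconst t 0]

private lemma key_lemma (F : ℝ → ℝ) (hcont : Continuous F)
    (hFeq : ∀ t, F (F (F t)) = 3 * F t - 2 * t) :
    (∃ b : ℝ, ∀ t, F t = t + b) ∨ (∃ c : ℝ, ∀ t, F t = c - 2 * t) := by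
  have hinj : Function.Injective F := by
    intro a b hab
    have ha := hFeq a
    have hb := hFeq b
    rw [hab, hb] at ha
    have : F a = F b := hab
    linarith
  rcases hcont.strictMono_of_inj hinj with h | h
  · exact Or.inl (incr_case F hcont h hFeq)
  · exact Or.inr (decr_case F hcont h hFeq)

/-- If `f : (0, ∞) → (0, ∞)` is continuous and satisfies `f(f(f x)) = (f x)^3 / x^2`
for all `x > 0`, then there is `c > 0` such that either `f(x) = c x` for all `x > 0`,
or `f(x) = c / x^2` for all `x > 0`. -/
theorem stmt_19 (f : ℝ → ℝ) (hmap : Set.MapsTo f (Set.Ioi (0 : ℝ)) (Set.Ioi (0 : ℝ)))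
    (hcont : ContinuousOn f (Set.Ioi (0 : ℝ)))
    (heq : ∀ x > (0 : ℝ), f (f (f x)) = (f x) ^ 3 / x ^ 2) :
    ∃ c : ℝ, 0 < c ∧
      ((∀ x > (0 : ℝ), f x = c * x) ∨ (∀ x > (0 : ℝ), f x = c / x ^ 2)) := by
  have hfpos : ∀ x : ℝ, 0 < x → 0 < f x := fun x hx => hmap (Set.mem_Ioi.mpr hx)
  obtain ⟨F, hFdef⟩ : ∃ F : ℝ → ℝ, F = fun t => Real.log (f (Real.exp t)) := ⟨_, rfl⟩
  have hFval : ∀ t : ℝ, F t = Real.log (f (Real.exp t)) := fun t => by rw [hFdef]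
  have hcontF : Continuous F := by
    rw [hFdef]
    have h1 : Continuous fun t : ℝ => f (Real.exp t) :=
      hcont.comp_continuous Real.continuous_exp fun t => Set.mem_Ioi.mpr (Real.exp_pos t)
    exact (Real.continuousOn_log.comp_continuous h1 fun t =>
      Set.mem_compl_singleton_iff.mpr (ne_of_gt (hfpos _ (Real.exp_pos t))))
  have hFlog : ∀ x : ℝ, 0 < x → F (Real.log x) = Real.log (f x) := by
    intro x hx
    rw [hFval, Real.exp_log hx]
  have hFeq : ∀ t, F (F (F t)) = 3 * F t - 2 * t := by
    intro t
    have hx : (0:ℝ) < Real.exp t := Real.exp_pos t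
    have hy : 0 < f (Real.exp t) := hfpos _ hx
    have hz : 0 < f (f (Real.exp t)) := hfpos _ hy
    have h1 : F t = Real.log (f (Real.exp t)) := hFval t
    have h2 : F (F t) = Real.log (f (f (Real.exp t))) := by
      rw [h1, hFlog _ hy]
    have h3 : F (F (F t)) = Real.log (f (f (f (Real.exp t)))) := by
      rw [h2, hFlog _ hz]
    rw [h3, heq _ hx, Real.log_div (by positivity) (by positivity),
      Real.log_pow, Real.log_pow, Real.log_exp, h1]
    push_cast
    ring
  rcases key_lemma F hcontF hFeq with ⟨b, hb⟩ | ⟨c, hc⟩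
  · refine ⟨Real.exp b, Real.exp_pos b, Or.inl fun x hx => ?_⟩
    have h1 : Real.log (f x) = Real.log x + b := by rw [← hFlog x hx, hb]
    have h2 : f x = Real.exp (Real.log x + b) := by
      rw [← h1, Real.exp_log (hfpos x hx)]
    rw [h2, Real.exp_add, Real.exp_log hx]
    ring
  · refine ⟨Real.exp c, Real.exp_pos c, Or.inr fun x hx => ?_⟩
    have h1 : Real.log (f x) = c - 2 * Real.log x := by rw [← hFlog x hx, hc]
    have h2 : f x = Real.exp (c - 2 * Real.log x) := by
      rw [← h1, Real.exp_log (hfpos x hx)]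
    rw [h2, Real.exp_sub]
    congr 1
    rw [show (2:ℝ) * Real.log x = (2:ℕ) * Real.log x by norm_num,
      Real.exp_nat_mul, Real.exp_log hx]
end
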